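/- arXiv:0706.1800 — 4 statements merged into one kernel-verified Lean document; each statement's English description precedes it below -/
import Mathlib

section
/- Let A be a skew shape and let rects_{k,l}(A) denote the number of k × l rectangular subdiagrams contained inside A. Then for all k, l ≥ 1, rects_{k,l}(A) = Σ_{l' ≥ l} (rows_k(A)^t)_{l'} = Σ_{k' ≥ k} (cols_l(A)^t)_{k'}. Equivalently, rects_{k,l}(A) equals the number of boxes weakly to the right of column l in the Young diagram of the partition rows_k(A). Consequently, any one of the three arrays of data (rows_k(A))_{k≥1}, (cols_l(A))_{l≥1}, (rects_{k,l}(A))_{k,l≥1} on A determines the other two uniquely. -/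
open Finset

/-- The weakly decreasing rearrangement of a finite sequence (list) of natural numbers,
i.e. the partition obtained by sorting its parts into weakly decreasing order. -/
def sortDesc (l : List ℕ) : List ℕ := l.mergeSort (fun a b => b ≤ a)

/-- The (extended) dominance order on partitions, represented as weakly decreasing lists
of natural numbers (parts beyond the length of the list are taken to be `0`):
`Dom a b` means `a ⊴ b`, i.e. `a₁ + ⋯ + a_k ≤ b₁ + ⋯ + b_k` for all `k`. -/
def Dom (a b : List ℕ) : Prop := ∀ k : ℕ, (a.take k).sum ≤ (b.take k).sum

/-- The conjugate (transpose) of a partition given as a list of natural numbers: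
the `j`-th entry (0-indexed) is the number of parts that are `> j`. -/
def conj (l : List ℕ) : List ℕ :=
  (List.range (l.foldr max 0)).map (fun j => (l.filter (fun x => j < x)).length)

/-- A skew shape `λ/μ`: a pair of Young diagrams `μ ⊆ λ`. -/
structure SkewShape where
  outer : YoungDiagram
  inner : YoungDiagram
  le : inner ≤ outer

namespace SkewShape

/-- The cells (boxes) of a skew shape: boxes of the outer diagram not in the inner one. -/
def cells (A : SkewShape) : Finset (ℕ × ℕ) := A.outer.cells \ A.inner.cells

/-- The number of rows of (the outer shape of) a skew shape. -/
def numRows (A : SkewShape) : ℕ := A.outer.colLen 0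

/-- The number of columns of (the outer shape of) a skew shape. -/
def numCols (A : SkewShape) : ℕ := A.outer.rowLen 0

/-- `A.overlap k i` is the number of columns occupied in common by the `k` consecutive
rows `i, i+1, …, i+k-1` of the skew shape `A` (rows indexed from 0). -/
def overlap (A : SkewShape) (k i : ℕ) : ℕ :=
  ((Finset.range A.numCols).filter (fun j => ∀ t, t < k → (i + t, j) ∈ A.cells)).card

/-- `rows_k(A)`: the weakly decreasing rearrangement of the row-overlap numbers
`(overlap k 0, overlap k 1, …)`; zero parts are discarded (a partition is identified
with its zero-padded versions).  `A.rowsK 1` is the partition of row lengths of `A`. -/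
def rowsK (A : SkewShape) (k : ℕ) : List ℕ :=
  sortDesc (((List.range (A.numRows + 1 - k)).map (A.overlap k)).filter (fun x => 0 < x))

/-- The transpose (conjugate) of a skew shape. -/
def transpose (A : SkewShape) : SkewShape :=
  ⟨A.outer.transpose, A.inner.transpose, YoungDiagram.transpose_mono A.le⟩

/-- `cols_l(A)`: the weakly decreasing rearrangement of the column-overlap numbers of `A`;
`A.colsK 1` is the partition of column lengths of `A`. -/
def colsK (A : SkewShape) (l : ℕ) : List ℕ := A.transpose.rowsK l

/-- `rects k l A` is the number of `k × l` rectangular subdiagrams (contiguous `k × l`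
blocks of boxes) contained inside the skew shape `A`, recorded by the position of
their top-left corner. -/
def rects (A : SkewShape) (k l : ℕ) : ℕ :=
  (((Finset.range A.numRows) ×ˢ (Finset.range A.numCols)).filter
    (fun p => ∀ t, t < k → ∀ u, u < l → (p.1 + t, p.2 + u) ∈ A.cells)).card

end SkewShape

/-- A semistandard Young tableau of skew shape `A`: a filling of the boxes of `A`
with positive integers, weakly increasing along rows and strictly increasing down
columns (entries outside `A` are recorded as `0`). -/
structure SkewSsyt (A : SkewShape) where
  entry : ℕ → ℕ → ℕ
  pos : ∀ i j, (i, j) ∈ A.cells → 1 ≤ entry i j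
  zeros : ∀ i j, (i, j) ∉ A.cells → entry i j = 0
  row_weak : ∀ i j1 j2, j1 ≤ j2 → (i, j1) ∈ A.cells → (i, j2) ∈ A.cells →
      entry i j1 ≤ entry i j2
  col_strict : ∀ i1 i2 j, i1 < i2 → (i1, j) ∈ A.cells → (i2, j) ∈ A.cells →
      entry i1 j < entry i2 j

/-- The number of boxes of `T` filled with the entry `v`. -/
def contentCount {A : SkewShape} (T : SkewSsyt A) (v : ℕ) : ℕ :=
  (A.cells.filter (fun c => T.entry c.1 c.2 = v)).card

/-- `T` has content `ν` (a partition written as a list, 0-indexed: `ν.getD v 0` is the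
`(v+1)`-st part): the number of entries equal to `v + 1` is the `(v+1)`-st part of `ν`. -/
def HasContent {A : SkewShape} (T : SkewSsyt A) (ν : List ℕ) : Prop :=
  ∀ v : ℕ, contentCount T (v + 1) = ν.getD v 0

/-- `readBefore c c'` : the box `c` comes strictly before the box `c'` in the reverse
reading order (rows top to bottom, each row read right to left). -/
def readBefore (c c' : ℕ × ℕ) : Prop := c.1 < c'.1 ∨ (c.1 = c'.1 ∧ c'.2 < c.2)

instance (c c' : ℕ × ℕ) : Decidable (readBefore c c') := by
  unfold readBefore; infer_instance

/-- `T` is a Littlewood–Richardson filling: its reverse reading word is a lattice word,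
i.e. at every box `c` carrying an entry `v + 2`, the number of occurrences of `v + 2`
read so far (weakly up to `c`) is at most the number of occurrences of `v + 1` read
strictly before `c`. -/
def IsLR {A : SkewShape} (T : SkewSsyt A) : Prop :=
  ∀ c ∈ A.cells, ∀ v : ℕ, T.entry c.1 c.2 = v + 2 →
    (A.cells.filter (fun c' => T.entry c'.1 c'.2 = v + 2 ∧ (readBefore c' c ∨ c' = c))).card ≤
    (A.cells.filter (fun c' => T.entry c'.1 c'.2 = v + 1 ∧ readBefore c' c)).card

/-- The support of the skew Schur function `s_A`: by the Littlewood–Richardson rule,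
the set of partitions `ν` (weakly decreasing lists) admitting an LR filling of `A`
of content `ν`, i.e. those `ν` with `s_ν` appearing with nonzero coefficient in `s_A`. -/
def SkewShape.support (A : SkewShape) : Set (List ℕ) :=
  { ν | ν.Pairwise (· ≥ ·) ∧ ∃ T : SkewSsyt A, IsLR T ∧ HasContent T ν }

/-- The coefficient of the Schur function `s_ν` in the Schur expansion of `s_A`:
by the Littlewood–Richardson rule, the number of LR fillings of `A` of content `ν`. -/
noncomputable def lrCoeff (A : SkewShape) (ν : List ℕ) : ℕ :=
  Nat.card { T : SkewSsyt A // IsLR T ∧ HasContent T ν }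

/-- `s_A − s_B` is Schur-positive: every coefficient in the Schur expansion of the
difference is nonnegative, i.e. (by the LR rule) each LR coefficient of `B` is at most
the corresponding one of `A`. -/
def SchurPositiveDiff (A B : SkewShape) : Prop :=
  ∀ ν : List ℕ, ν.Pairwise (· ≥ ·) → lrCoeff B ν ≤ lrCoeff A ν

/-- The skew Schur function `s_A = Σ_T x^T`, as a formal power series in the variables
`x_0, x_1, x_2, …` (variable `x_v` recording entries equal to `v + 1`): the coefficient
of the monomial with exponents `d` is the number of SSYT of shape `A` and content `d`. -/
noncomputable def skewSchur (A : SkewShape) : MvPowerSeries ℕ ℤ :=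
  fun d => (Nat.card { T : SkewSsyt A // ∀ v : ℕ, contentCount T (v + 1) = d v } : ℤ)

/-- The boxes remaining after deleting the top box of every non-empty column of `A`:
a box survives iff there is a box of `A` directly above it. -/
def trimCells (A : SkewShape) : Finset (ℕ × ℕ) :=
  A.cells.filter (fun c => 1 ≤ c.1 ∧ (c.1 - 1, c.2) ∈ A.cells)

/-- The set of boxes of the skew shape `A ∗ B`, obtained by positioning `B` immediately
below and to the left of `A` so that `A` and `B` share no common row or column. -/
def starCells (A B : SkewShape) : Finset (ℕ × ℕ) :=
  A.cells.image (fun c => (c.1, c.2 + B.numCols)) ∪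
    B.cells.image (fun c => (c.1 + A.numRows, c.2))

/-- The straight shape (partition) `μ`, viewed as the skew shape `μ/(0)`. -/
def ofYD (μ : YoungDiagram) : SkewShape := ⟨μ, ⊥, bot_le⟩

/-- The list of parts `(μ_k, μ_{k+1}, …, μ_l)` (1-indexed) of a partition `μ` given as a
Young diagram, parts beyond the length of `μ` being `0`. -/
def tailParts (μ : YoungDiagram) (k l : ℕ) : List ℕ :=
  (List.range (l + 1 - k)).map (fun t => μ.rowLen (k - 1 + t))


section AuxLemmas

lemma list_range_map_sum (n : ℕ) (f : ℕ → ℕ) :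
    ((List.range n).map f).sum = ∑ i ∈ Finset.range n, f i := by
  induction n with
  | zero => simp
  | succ n ih => simp [List.range_succ, Finset.sum_range_succ, ih]

lemma drop_range_eq (n j : ℕ) :
    (List.range n).drop j = (List.range (n - j)).map (j + ·) := by
  rcases le_or_gt j n with h | h
  · have h1 : List.range n = List.range' 0 j ++ List.range' j (n - j) := by
      have h2 := List.range'_append_1 (s := 0) (m := j) (n := n - j)
      rw [Nat.zero_add, Nat.add_sub_cancel' h] at h2
      rw [List.range_eq_range', ← h2]
    have hlen : (List.range' 0 j).length = j := by simp
    rw [h1, List.drop_left' hlen, ← List.range'_eq_map_range]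
  · rw [List.drop_eq_nil_of_le (by simpa using h.le), Nat.sub_eq_zero_of_le h.le]
    simp

lemma sum_map_finsum (m : List ℕ) (n : ℕ) (g : ℕ → ℕ → ℕ) :
    ∑ t ∈ Finset.range n, (m.map (g t)).sum
      = (m.map (fun p => ∑ t ∈ Finset.range n, g t p)).sum := by
  induction m with
  | nil => simp
  | cons a m ih => simp [Finset.sum_add_distrib, ih]

lemma le_foldr_max (m : List ℕ) : ∀ p ∈ m, p ≤ m.foldr max 0 := by
  induction m with
  | nil => simp
  | cons a m ih =>
    intro p hp
    rcases List.mem_cons.1 hp with rfl | hp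
    · exact le_max_left _ _
    · exact (ih p hp).trans (le_max_right _ _)

lemma filter_length_eq_sum (m : List ℕ) (P : ℕ → Prop) [DecidablePred P] :
    (m.filter (fun x => P x)).length = (m.map (fun p => if P p then 1 else 0)).sum := by
  induction m with
  | nil => simp
  | cons a m ih => by_cases h : P a <;> simp [List.filter_cons, h, ih] <;> omega

lemma conj_drop_sum (m : List ℕ) (j : ℕ) :
    ((conj m).drop j).sum = (m.map (fun p => p - j)).sum := by
  unfold conj
  rw [← List.map_drop, drop_range_eq, List.map_map, list_range_map_sum]
  have h1 : ∀ t : ℕ, ((fun j => (m.filter (fun x => j < x)).length) ∘ (j + ·)) t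
      = (m.map (fun p => if j + t < p then 1 else 0)).sum := by
    intro t
    simp only [Function.comp_apply]
    exact filter_length_eq_sum m (fun x => j + t < x)
  rw [Finset.sum_congr rfl (fun t _ => h1 t), sum_map_finsum]
  refine congrArg _ (List.map_congr_left ?_)
  intro p hp
  have hpM : p ≤ m.foldr max 0 := le_foldr_max m p hp
  rw [← Finset.card_filter]
  have : (Finset.range (m.foldr max 0 - j)).filter (fun t => j + t < p)
      = Finset.range (p - j) := by
    ext x
    simp only [Finset.mem_filter, Finset.mem_range]
    omega
  rw [this, Finset.card_range]

lemma sum_sub_succ (m : List ℕ) (j : ℕ) :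
    (m.map (fun p => p - j)).sum
      = (m.map (fun p => p - (j + 1))).sum + m.countP (fun x => j < x) := by
  induction m with
  | nil => simp
  | cons a m ih =>
    simp only [List.map_cons, List.sum_cons, List.countP_cons, ih]
    by_cases h : j < a <;> simp [h] <;> omega

lemma countP_lt_succ (m : List ℕ) (j : ℕ) :
    m.countP (fun x => j < x) = m.countP (fun x => j + 1 < x) + m.count (j + 1) := by
  induction m with
  | nil => simp
  | cons a m ih =>
    simp only [List.countP_cons, List.count_cons, ih]
    by_cases h1 : j < a <;> by_cases h2 : j + 1 < a <;> by_cases h3 : a = j + 1 <;>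
      simp [h1, h2, h3] <;> omega

lemma eq_of_sum_subs (s t : List ℕ)
    (hs : s.Pairwise (· ≥ ·)) (ht : t.Pairwise (· ≥ ·))
    (hsp : ∀ x ∈ s, 0 < x) (htp : ∀ x ∈ t, 0 < x)
    (h : ∀ j : ℕ, (s.map (fun p => p - j)).sum = (t.map (fun p => p - j)).sum) :
    s = t := by
  have hcount : ∀ j, s.countP (fun x => j < x) = t.countP (fun x => j < x) := by
    intro j
    have h1 := h j
    have h2 := h (j + 1)
    rw [sum_sub_succ s j, sum_sub_succ t j] at h1
    omega
  have hc : ∀ v : ℕ, s.count v = t.count v := by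
    intro v
    cases v with
    | zero =>
      have h0s : (0 : ℕ) ∉ s := fun h0 => absurd (hsp 0 h0) (by simp)
      have h0t : (0 : ℕ) ∉ t := fun h0 => absurd (htp 0 h0) (by simp)
      rw [List.count_eq_zero.2 h0s, List.count_eq_zero.2 h0t]
    | succ v =>
      have e1 := countP_lt_succ s v
      have e2 := countP_lt_succ t v
      have e3 := hcount v
      have e4 := hcount (v + 1)
      omega
  haveI : IsAntisymm ℕ (· ≥ ·) := ⟨fun a b h1 h2 => le_antisymm h2 h1⟩
  exact List.Perm.eq_of_pairwise (fun a b _ _ h1 h2 => le_antisymm h2 h1) hs ht (List.perm_iff_count.mpr hc)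

lemma sortDesc_sorted (l : List ℕ) : (sortDesc l).Pairwise (· ≥ ·) := by
  have h := List.pairwise_mergeSort (le := fun a b : ℕ => decide (b ≤ a))
    (fun a b c h1 h2 => by simp at h1 h2 ⊢; omega)
    (fun a b => by simp [Bool.or_eq_true]; omega) l
  exact h.imp (fun {a b} hab => by simpa using hab)

lemma mem_sortDesc {x : ℕ} {l : List ℕ} : x ∈ sortDesc l ↔ x ∈ l :=
  (List.mergeSort_perm l _).mem_iff

lemma sum_map_filter_pos (s : List ℕ) (j : ℕ) :
    ((s.filter (fun x => 0 < x)).map (fun p => p - j)).sum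
      = (s.map (fun p => p - j)).sum := by
  induction s with
  | nil => simp
  | cons a s ih =>
    by_cases h : 0 < a
    · simp [List.filter_cons, h, ih]
    · have : a = 0 := by omega
      simp [List.filter_cons, h, this, ih]

namespace SkewShape

lemma mem_cells_iff (A : SkewShape) (i j : ℕ) :
    (i, j) ∈ A.cells ↔ A.inner.rowLen i ≤ j ∧ j < A.outer.rowLen i := by
  simp [cells, Finset.mem_sdiff, YoungDiagram.mem_cells, YoungDiagram.mem_iff_lt_rowLen,
    not_lt, and_comm]

lemma rowLen_zero_of_ge (μ : YoungDiagram) (i : ℕ) (h : μ.colLen 0 ≤ i) :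
    μ.rowLen i = 0 := by
  by_contra h'
  have : (i, 0) ∈ μ := YoungDiagram.mem_iff_lt_rowLen.2 (Nat.pos_of_ne_zero h')
  rw [YoungDiagram.mem_iff_lt_colLen] at this
  omega

lemma block_iff (A : SkewShape) (k l i j : ℕ) (hk : 1 ≤ k) (hl : 1 ≤ l) :
    (∀ t, t < k → ∀ u, u < l → (i + t, j + u) ∈ A.cells) ↔
      A.inner.rowLen i ≤ j ∧ j + (l - 1) < A.outer.rowLen (i + (k - 1)) := by
  constructor
  · intro h
    have h1 := (A.mem_cells_iff _ _).1 (h 0 hk 0 hl)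
    have h2 := (A.mem_cells_iff _ _).1 (h (k - 1) (by omega) (l - 1) (by omega))
    exact ⟨by simpa using h1.1, h2.2⟩
  · rintro ⟨ha, hb⟩ t ht u hu
    rw [A.mem_cells_iff]
    constructor
    · calc A.inner.rowLen (i + t) ≤ A.inner.rowLen i := A.inner.rowLen_anti i (i + t) (by omega)
        _ ≤ j := ha
        _ ≤ j + u := by omega
    · calc j + u ≤ j + (l - 1) := by omega
        _ < A.outer.rowLen (i + (k - 1)) := hb
        _ ≤ A.outer.rowLen (i + t) := A.outer.rowLen_anti _ _ (by omega)

lemma rowLen_le_numCols (A : SkewShape) (i : ℕ) : A.outer.rowLen i ≤ A.numCols :=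
  A.outer.rowLen_anti 0 i (Nat.zero_le i)

lemma overlap_eq (A : SkewShape) (k i : ℕ) (hk : 1 ≤ k) :
    A.overlap k i = A.outer.rowLen (i + (k - 1)) - A.inner.rowLen i := by
  unfold overlap
  have hcond : ∀ j, (∀ t, t < k → (i + t, j) ∈ A.cells) ↔
      (A.inner.rowLen i ≤ j ∧ j < A.outer.rowLen (i + (k - 1))) := by
    intro j
    have := A.block_iff k 1 i j hk le_rfl
    constructor
    · intro h
      have := this.1 (fun t ht u hu => by
        obtain rfl : u = 0 := by omega
        simpa using h t ht)
      omega
    · intro h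
      intro t ht
      have h2 := this.2 (by omega) t ht 0 (by omega)
      simpa using h2
  have hset : (Finset.range A.numCols).filter (fun j => ∀ t, t < k → (i + t, j) ∈ A.cells)
      = Finset.Ico (A.inner.rowLen i) (A.outer.rowLen (i + (k - 1))) := by
    ext j
    simp only [Finset.mem_filter, Finset.mem_range, Finset.mem_Ico, hcond j]
    have := A.rowLen_le_numCols (i + (k - 1))
    omega
  rw [hset, Nat.card_Ico]

lemma overlap_eq_zero (A : SkewShape) (k i : ℕ) (hk : 1 ≤ k)
    (hi : A.numRows + 1 - k ≤ i) : A.overlap k i = 0 := by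
  have h0 : A.outer.rowLen (i + (k - 1)) = 0 := by
    apply rowLen_zero_of_ge
    have hnr : A.numRows = A.outer.colLen 0 := rfl
    omega
  rw [A.overlap_eq k i hk, h0]
  simp

lemma rects_eq_sum (A : SkewShape) (k l : ℕ) (hk : 1 ≤ k) (hl : 1 ≤ l) :
    A.rects k l = ∑ i ∈ Finset.range A.numRows, (A.overlap k i - (l - 1)) := by
  unfold rects
  rw [Finset.card_filter, Finset.sum_product]
  refine Finset.sum_congr rfl (fun i _ => ?_)
  rw [← Finset.card_filter]
  have hset : (Finset.range A.numCols).filter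
        (fun j => ∀ t, t < k → ∀ u, u < l → (i + t, j + u) ∈ A.cells)
      = Finset.Ico (A.inner.rowLen i) (A.outer.rowLen (i + (k - 1)) - (l - 1)) := by
    ext j
    simp only [Finset.mem_filter, Finset.mem_range, Finset.mem_Ico, A.block_iff k l i j hk hl]
    have := A.rowLen_le_numCols (i + (k - 1))
    omega
  rw [hset, Nat.card_Ico, A.overlap_eq k i hk]
  omega

lemma rects_eq_rowsK_sum (A : SkewShape) (k l : ℕ) (hk : 1 ≤ k) (hl : 1 ≤ l) :
    A.rects k l = ((A.rowsK k).map (fun p => p - (l - 1))).sum := by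
  rw [A.rects_eq_sum k l hk hl]
  unfold rowsK sortDesc
  rw [((List.mergeSort_perm _ _).map (fun p => p - (l - 1))).sum_eq, sum_map_filter_pos,
    List.map_map]
  have : (fun p => p - (l - 1)) ∘ A.overlap k = fun i => A.overlap k i - (l - 1) := rfl
  rw [this, list_range_map_sum]
  symm
  apply Finset.sum_subset
  · exact Finset.range_subset_range.2 (by omega)
  · intro i _ hi
    rw [A.overlap_eq_zero k i hk (by simpa using hi)]
    simp

lemma cells_transpose (A : SkewShape) (c : ℕ × ℕ) :
    c ∈ A.transpose.cells ↔ c.swap ∈ A.cells := by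
  simp [cells, transpose, Finset.mem_sdiff, YoungDiagram.mem_cells, YoungDiagram.mem_transpose]

lemma numRows_transpose (A : SkewShape) : A.transpose.numRows = A.numCols := by
  simp [numRows, numCols, transpose, YoungDiagram.colLen_transpose]

lemma numCols_transpose (A : SkewShape) : A.transpose.numCols = A.numRows := by
  simp [numRows, numCols, transpose, YoungDiagram.rowLen_transpose]

lemma rects_transpose (A : SkewShape) (k l : ℕ) :
    A.transpose.rects l k = A.rects k l := by
  unfold rects
  rw [numRows_transpose, numCols_transpose]
  apply Finset.card_nbij' Prod.swap Prod.swap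
  · rintro ⟨i, j⟩ hij
    simp only [Finset.mem_coe, Finset.mem_filter, Finset.mem_product, Finset.mem_range] at hij ⊢
    refine ⟨⟨hij.1.2, hij.1.1⟩, fun t ht u hu => ?_⟩
    have := hij.2 u hu t ht
    rwa [cells_transpose] at this
  · rintro ⟨i, j⟩ hij
    simp only [Finset.mem_coe, Finset.mem_filter, Finset.mem_product, Finset.mem_range] at hij ⊢
    refine ⟨⟨hij.1.2, hij.1.1⟩, fun t ht u hu => ?_⟩
    rw [cells_transpose]
    exact hij.2 u hu t ht
  · intro a _; simp
  · intro a _; simp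

lemma rowsK_sorted (A : SkewShape) (k : ℕ) : (A.rowsK k).Pairwise (· ≥ ·) :=
  sortDesc_sorted _

lemma rowsK_pos (A : SkewShape) (k : ℕ) : ∀ x ∈ A.rowsK k, 0 < x := by
  intro x hx
  rw [rowsK, mem_sortDesc] at hx
  have := List.of_mem_filter hx
  simpa using this

lemma rows_iff_rects (A B : SkewShape) :
    (∀ k, 1 ≤ k → A.rowsK k = B.rowsK k) ↔
      (∀ k l, 1 ≤ k → 1 ≤ l → A.rects k l = B.rects k l) := by
  constructor
  · intro h k l hk hl
    rw [A.rects_eq_rowsK_sum k l hk hl, B.rects_eq_rowsK_sum k l hk hl, h k hk]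
  · intro h k hk
    refine eq_of_sum_subs _ _ (A.rowsK_sorted k) (B.rowsK_sorted k)
      (A.rowsK_pos k) (B.rowsK_pos k) (fun j => ?_)
    have h1 := h k (j + 1) hk (by omega)
    rw [A.rects_eq_rowsK_sum k (j + 1) hk (by omega),
      B.rects_eq_rowsK_sum k (j + 1) hk (by omega)] at h1
    simpa using h1

end SkewShape

end AuxLemmas

/-- Proposition relating `rows_k`, `cols_l` and `rects_{k,l}`.
For any skew shape `A` and all `k, l ≥ 1`,
`rects_{k,l}(A) = Σ_{l' ≥ l} (rows_k(A)ᵗ)_{l'} = Σ_{k' ≥ k} (cols_l(A)ᵗ)_{k'}`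
(the first sum being the number of boxes weakly to the right of column `l` in the
Young diagram of `rows_k(A)`).  Consequently, any one of the three arrays of data
`(rows_k(A))_{k≥1}`, `(cols_l(A))_{l≥1}`, `(rects_{k,l}(A))_{k,l≥1}` determines the
other two uniquely. -/
theorem rects_eq_sums_and_determination (A B : SkewShape) :
    (∀ k l : ℕ, 1 ≤ k → 1 ≤ l →
      A.rects k l = ((conj (A.rowsK k)).drop (l - 1)).sum ∧
      A.rects k l = ((conj (A.colsK l)).drop (k - 1)).sum) ∧
    ((∀ k, 1 ≤ k → A.rowsK k = B.rowsK k) ↔ (∀ l, 1 ≤ l → A.colsK l = B.colsK l)) ∧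
    ((∀ k, 1 ≤ k → A.rowsK k = B.rowsK k) ↔
      (∀ k l, 1 ≤ k → 1 ≤ l → A.rects k l = B.rects k l)) := by
  
  refine ⟨fun k l hk hl => ⟨?_, ?_⟩, ?_, (A.rows_iff_rects B)⟩
  · rw [A.rects_eq_rowsK_sum k l hk hl, conj_drop_sum]
  · rw [← A.rects_transpose k l, SkewShape.rects_eq_rowsK_sum _ l k hl hk, conj_drop_sum]
    rfl
  · rw [A.rows_iff_rects B]
    have hT := (A.transpose.rows_iff_rects B.transpose)
    constructor
    · intro h l hl
      exact hT.2 (fun k' l' hk' hl' => by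
        rw [A.rects_transpose, B.rects_transpose]; exact h l' k' hl' hk') l hl
    · intro h k l hk hl
      rw [← A.rects_transpose k l, ← B.rects_transpose k l]
      exact hT.1 h l k hl hk
end

section
/- Let A and B be skew shapes. The following three conditions are equivalent: (i) rows_k(A) ⊴ rows_k(B) for all k ≥ 1; (ii) cols_l(A) ⊴ cols_l(B) for all l ≥ 1; (iii) rects_{k,l}(A) ≤ rects_{k,l}(B) for all k, l ≥ 1. -/
open Finset

namespace Aux


lemma sum_take_le (s : List ℕ) (k : ℕ) : (s.take k).sum ≤ s.sum := by
  conv_rhs => rw [← List.take_append_drop k s]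
  rw [List.sum_append]
  exact Nat.le_add_right _ _

lemma sum_map_tsub_ge (l : List ℕ) (m : ℕ) :
    l.sum - l.length * m ≤ (l.map (fun x => x - m)).sum := by
  induction l with
  | nil => simp
  | cons a t ih =>
    simp only [List.sum_cons, List.map_cons, List.length_cons, Nat.add_mul, Nat.one_mul]
    generalize t.length * m = L at *
    omega

lemma sum_map_tsub_of_le (l : List ℕ) (m : ℕ) (h : ∀ x ∈ l, m ≤ x) :
    (l.map (fun x => x - m)).sum + l.length * m = l.sum := by
  induction l with
  | nil => simp
  | cons a t ih =>
    have ha : m ≤ a := h a (by simp)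
    have iht := ih (fun x hx => h x (by simp [hx]))
    simp only [List.sum_cons, List.map_cons, List.length_cons, Nat.add_mul, Nat.one_mul]
    generalize t.length * m = L at *
    omega

lemma sum_map_tsub_zero (l : List ℕ) (m : ℕ) (h : ∀ x ∈ l, x ≤ m) :
    (l.map (fun x => x - m)).sum = 0 := by
  induction l with
  | nil => simp
  | cons a t ih =>
    have ha : a ≤ m := h a (by simp)
    have iht := ih (fun x hx => h x (by simp [hx]))
    simp only [List.sum_cons, List.map_cons]
    omega

lemma sum_map_prefix_le (l : List ℕ) (k : ℕ) (f : ℕ → ℕ) :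
    ((l.take k).map f).sum ≤ (l.map f).sum := by
  rw [List.map_take]
  exact sum_take_le _ _

lemma sorted_split (l : List ℕ) (hl : l.Pairwise (· ≥ ·)) (m : ℕ) :
    ∃ k, (∀ x ∈ l.take k, m < x) ∧ ∀ x ∈ l.drop k, x ≤ m := by
  induction l with
  | nil => exact ⟨0, by simp, by simp⟩
  | cons a t ih =>
    rcases ih hl.of_cons with ⟨k, h1, h2⟩
    by_cases ha : a ≤ m
    · refine ⟨0, by simp, ?_⟩
      intro x hx
      simp only [List.drop_zero, List.mem_cons] at hx
      rcases hx with rfl | hx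
      · exact ha
      · exact le_trans (List.rel_of_pairwise_cons hl hx) ha
    · refine ⟨k + 1, ?_, ?_⟩
      · intro x hx
        simp only [List.take_succ_cons, List.mem_cons] at hx
        rcases hx with rfl | hx
        · omega
        · exact h1 x hx
      · intro x hx
        simp only [List.drop_succ_cons] at hx
        exact h2 x hx

lemma dom_iff_fsum (a b : List ℕ) (ha : a.Pairwise (· ≥ ·)) (hb : b.Pairwise (· ≥ ·)) :
    Dom a b ↔ ∀ m, (a.map (fun x => x - m)).sum ≤ (b.map (fun x => x - m)).sum := by
  constructor
  · intro hd m
    obtain ⟨k, h1, h2⟩ := sorted_split a ha m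
    have htk : a.take ((a.take k).length) = a.take k := by
      have h1' : (a.take k).take ((a.take k).length) = a.take k := List.take_length
      rw [List.take_take] at h1'
      have hle : (a.take k).length ≤ k := by rw [List.length_take]; omega
      rwa [min_eq_left hle] at h1'
    have hfa : (a.map (fun x => x - m)).sum + (a.take k).length * m = (a.take k).sum := by
      have hsplit : (a.map (fun x => x - m)).sum =
          ((a.take k).map (fun x => x - m)).sum + ((a.drop k).map (fun x => x - m)).sum := by
        conv_lhs => rw [← List.take_append_drop k a]
        rw [List.map_append, List.sum_append]
      rw [hsplit, sum_map_tsub_zero (a.drop k) m h2]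
      have := sum_map_tsub_of_le (a.take k) m (fun x hx => le_of_lt (h1 x hx))
      omega
    have hd' := hd ((a.take k).length)
    rw [htk] at hd'
    have hb1 := sum_map_tsub_ge (b.take ((a.take k).length)) m
    have hb2 := sum_map_prefix_le b ((a.take k).length) (fun x => x - m)
    have hlb : (b.take ((a.take k).length)).length ≤ (a.take k).length := by
      rw [List.length_take]; omega
    have hmul : (b.take ((a.take k).length)).length * m ≤ (a.take k).length * m :=
      Nat.mul_le_mul_right m hlb
    omega
  · intro hf k
    by_cases hkb : b.length ≤ k
    · have h1 : b.take k = b := List.take_of_length_le hkb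
      have h2 := hf 0
      simp only [Nat.sub_zero, List.map_id'] at h2
      calc (a.take k).sum ≤ a.sum := sum_take_le a k
        _ ≤ b.sum := by simpa using h2
        _ = (b.take k).sum := by rw [h1]
    · push_neg at hkb
      obtain ⟨m, hdrop⟩ : ∃ m, b.drop k = m :: b.drop (k + 1) :=
        ⟨_, List.drop_eq_getElem_cons hkb⟩
      have hmem : m ∈ b.drop k := by rw [hdrop]; simp
      have hcross : ∀ x ∈ b.take k, ∀ y ∈ b.drop k, y ≤ x :=
        (List.pairwise_append.mp (by rw [List.take_append_drop]; exact hb)).2.2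
      have h1 : ∀ x ∈ b.take k, m ≤ x := fun x hx => hcross x hx m hmem
      have h2 : ∀ x ∈ b.drop k, x ≤ m := by
        intro x hx
        rw [hdrop] at hx
        rcases List.mem_cons.mp hx with rfl | hx
        · exact le_refl _
        · have hs : (b.drop k).Pairwise (· ≥ ·) := hb.drop
          rw [hdrop] at hs
          exact List.rel_of_pairwise_cons hs hx
      have hltk : (b.take k).length = k := by rw [List.length_take]; omega
      have hfb : (b.map (fun x => x - m)).sum + k * m = (b.take k).sum := by
        have hsplit : (b.map (fun x => x - m)).sum =
            ((b.take k).map (fun x => x - m)).sum + ((b.drop k).map (fun x => x - m)).sum := by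
          conv_lhs => rw [← List.take_append_drop k b]
          rw [List.map_append, List.sum_append]
        rw [hsplit, sum_map_tsub_zero (b.drop k) m h2]
        have := sum_map_tsub_of_le (b.take k) m h1
        rw [hltk] at this
        omega
      have hfa : (a.take k).sum ≤ (a.map (fun x => x - m)).sum + k * m := by
        have h3 := sum_map_tsub_ge (a.take k) m
        have h4 := sum_map_prefix_le a k (fun x => x - m)
        have h5 : (a.take k).length ≤ k := by rw [List.length_take]; omega
        have hmul : (a.take k).length * m ≤ k * m := Nat.mul_le_mul_right m h5
        omega
      have := hf m
      omega



lemma mem_cells_iff (A : SkewShape) (r c : ℕ) :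
    (r, c) ∈ A.cells ↔ A.inner.rowLen r ≤ c ∧ c < A.outer.rowLen r := by
  rw [SkewShape.cells, Finset.mem_sdiff, YoungDiagram.mem_cells, YoungDiagram.mem_cells,
    YoungDiagram.mem_iff_lt_rowLen, YoungDiagram.mem_iff_lt_rowLen]
  omega

lemma rowLen_le_numCols (A : SkewShape) (r : ℕ) : A.outer.rowLen r ≤ A.numCols :=
  A.outer.rowLen_anti 0 r (Nat.zero_le r)

lemma rowLen_eq_zero_of_ge (A : SkewShape) (r : ℕ) (h : A.numRows ≤ r) :
    A.outer.rowLen r = 0 := by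
  by_contra h0
  have : (r, 0) ∈ A.outer := YoungDiagram.mem_iff_lt_rowLen.mpr (by omega)
  have := YoungDiagram.mem_iff_lt_colLen.mp this
  exact absurd this (by rw [SkewShape.numRows] at h; omega)

/-- The key interval description of the common columns of rows `i, …, i+k-1`. -/
lemma forall_mem_iff (A : SkewShape) (k i j : ℕ) (hk : 1 ≤ k) :
    (∀ t, t < k → (i + t, j) ∈ A.cells) ↔
      A.inner.rowLen i ≤ j ∧ j < A.outer.rowLen (i + (k - 1)) := by
  constructor
  · intro h
    have h0 := (mem_cells_iff A _ _).mp (h 0 (by omega))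
    have h1 := (mem_cells_iff A _ _).mp (h (k - 1) (by omega))
    exact ⟨by simpa using h0.1, h1.2⟩
  · rintro ⟨ha, hb⟩ t ht
    rw [mem_cells_iff]
    constructor
    · exact le_trans (A.inner.rowLen_anti i (i + t) (by omega)) ha
    · exact lt_of_lt_of_le hb (A.outer.rowLen_anti (i + t) (i + (k - 1)) (by omega))

lemma overlap_eq (A : SkewShape) (k i : ℕ) (hk : 1 ≤ k) :
    A.overlap k i = A.outer.rowLen (i + (k - 1)) - A.inner.rowLen i := by
  rw [SkewShape.overlap]
  have : (Finset.range A.numCols).filter (fun j => ∀ t, t < k → (i + t, j) ∈ A.cells) =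
      Finset.Ico (A.inner.rowLen i) (A.outer.rowLen (i + (k - 1))) := by
    ext j
    rw [Finset.mem_filter, Finset.mem_range, Finset.mem_Ico, forall_mem_iff A k i j hk]
    have := rowLen_le_numCols A (i + (k - 1))
    omega
  rw [this, Nat.card_Ico]

lemma row_count_eq (A : SkewShape) (k l i : ℕ) (hk : 1 ≤ k) (hl : 1 ≤ l) :
    ((Finset.range A.numCols).filter
      (fun j => ∀ t, t < k → ∀ u, u < l → (i + t, j + u) ∈ A.cells)).card =
      A.overlap k i + 1 - l := by
  have hpred : ∀ j, (∀ t, t < k → ∀ u, u < l → (i + t, j + u) ∈ A.cells) ↔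
      (A.inner.rowLen i ≤ j ∧ j + (l - 1) < A.outer.rowLen (i + (k - 1))) := by
    intro j
    constructor
    · intro h
      have h' : ∀ u, u < l → A.inner.rowLen i ≤ j + u ∧
          j + u < A.outer.rowLen (i + (k - 1)) := by
        intro u hu
        exact (forall_mem_iff A k i (j + u) hk).mp (fun t ht => h t ht u hu)
      have h0 := h' 0 (by omega)
      have h1 := h' (l - 1) (by omega)
      omega
    · rintro ⟨ha, hb⟩ t ht u hu
      have := (forall_mem_iff A k i (j + u) hk).mpr ⟨by omega, by omega⟩
      exact this t ht
  have hset : (Finset.range A.numCols).filter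
      (fun j => ∀ t, t < k → ∀ u, u < l → (i + t, j + u) ∈ A.cells) =
      Finset.Ico (A.inner.rowLen i) (A.outer.rowLen (i + (k - 1)) - (l - 1)) := by
    ext j
    rw [Finset.mem_filter, Finset.mem_range, Finset.mem_Ico, hpred j]
    have := rowLen_le_numCols A (i + (k - 1))
    omega
  rw [hset, Nat.card_Ico, overlap_eq A k i hk]
  omega

lemma rects_eq (A : SkewShape) (k l : ℕ) (hk : 1 ≤ k) (hl : 1 ≤ l) :
    A.rects k l = ∑ i ∈ Finset.range (A.numRows + 1 - k), (A.overlap k i + 1 - l) := by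
  rw [SkewShape.rects, Finset.card_filter, Finset.sum_product]
  have hrow : ∀ i, (∑ j ∈ Finset.range A.numCols,
      if (∀ t, t < k → ∀ u, u < l → (i + t, j + u) ∈ A.cells) then 1 else 0) =
      A.overlap k i + 1 - l := by
    intro i
    rw [← Finset.card_filter]
    exact row_count_eq A k l i hk hl
  rw [Finset.sum_congr rfl (fun i _ => hrow i)]
  symm
  apply Finset.sum_subset
  · intro x hx
    rw [Finset.mem_range] at *
    omega
  · intro i hi hni
    rw [Finset.mem_range] at hi hni
    have hzero : A.outer.rowLen (i + (k - 1)) = 0 :=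
      rowLen_eq_zero_of_ge A _ (by omega)
    rw [overlap_eq A k i hk, hzero]
    omega

lemma mem_transpose_cells (A : SkewShape) (c : ℕ × ℕ) :
    c ∈ A.transpose.cells ↔ c.swap ∈ A.cells := by
  rw [SkewShape.cells, SkewShape.cells, SkewShape.transpose, Finset.mem_sdiff,
    Finset.mem_sdiff, YoungDiagram.mem_cells, YoungDiagram.mem_cells,
    YoungDiagram.mem_cells, YoungDiagram.mem_cells, YoungDiagram.mem_transpose,
    YoungDiagram.mem_transpose]

lemma numRows_transpose (A : SkewShape) : A.transpose.numRows = A.numCols := by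
  rw [SkewShape.numRows, SkewShape.transpose, YoungDiagram.colLen_transpose, SkewShape.numCols]

lemma numCols_transpose (A : SkewShape) : A.transpose.numCols = A.numRows := by
  rw [SkewShape.numCols, SkewShape.transpose, YoungDiagram.rowLen_transpose, SkewShape.numRows]

lemma rects_transpose (A : SkewShape) (k l : ℕ) : A.transpose.rects l k = A.rects k l := by
  rw [SkewShape.rects, SkewShape.rects, Finset.card_filter, Finset.card_filter,
    Finset.sum_product, Finset.sum_product, Finset.sum_comm, numRows_transpose,
    numCols_transpose]
  refine Finset.sum_congr rfl fun i _ => Finset.sum_congr rfl fun j _ => ?_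
  refine if_congr ?_ rfl rfl
  constructor
  · intro h t ht u hu
    have := h u hu t ht
    rwa [mem_transpose_cells] at this
  · intro h t ht u hu
    rw [mem_transpose_cells]
    exact h u hu t ht


lemma sortDesc_sorted (l : List ℕ) : (sortDesc l).Pairwise (· ≥ ·) := by
  have h := List.pairwise_mergeSort (le := fun a b : ℕ => decide (b ≤ a))
    (fun a b c hab hbc => by
      simp only [decide_eq_true_eq] at *
      omega)
    (fun a b => by simpa using le_total b a) l
  refine h.imp ?_
  intro a b hab
  simpa using hab

lemma rowsK_sorted (A : SkewShape) (k : ℕ) : (A.rowsK k).Pairwise (· ≥ ·) := by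
  rw [SkewShape.rowsK]
  exact sortDesc_sorted _

lemma sum_map_filter (L : List ℕ) (p : ℕ → Bool) (f : ℕ → ℕ) (h : ∀ x, ¬ p x → f x = 0) :
    ((L.filter p).map f).sum = (L.map f).sum := by
  induction L with
  | nil => simp
  | cons a t ih =>
    by_cases hp : p a <;> simp [List.filter_cons, hp, ih, h a]

lemma rects_eq_rowsK (A : SkewShape) (k l : ℕ) (hk : 1 ≤ k) (hl : 1 ≤ l) :
    A.rects k l = ((A.rowsK k).map (fun x => x + 1 - l)).sum := by
  rw [rects_eq A k l hk hl, SkewShape.rowsK, sortDesc]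
  rw [((List.mergeSort_perm _ _).map (fun x => x + 1 - l)).sum_eq]
  rw [sum_map_filter _ _ _ (fun x hx => by
    simp only [decide_eq_true_eq] at hx
    omega)]
  rw [List.map_map]
  rfl

lemma rows_dom_iff_rects (X Y : SkewShape) :
    (∀ k, 1 ≤ k → Dom (X.rowsK k) (Y.rowsK k)) ↔
      (∀ k l, 1 ≤ k → 1 ≤ l → X.rects k l ≤ Y.rects k l) := by
  have hfun : ∀ (L : List ℕ) (l : ℕ), 1 ≤ l →
      (L.map (fun x => x + 1 - l)).sum = (L.map (fun x => x - (l - 1))).sum := by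
    intro L l hl
    congr 1
    apply List.map_congr_left
    intro x _
    omega
  constructor
  · intro h k l hk hl
    rw [rects_eq_rowsK X k l hk hl, rects_eq_rowsK Y k l hk hl,
      hfun _ l hl, hfun _ l hl]
    exact (dom_iff_fsum _ _ (rowsK_sorted X k) (rowsK_sorted Y k)).mp (h k hk) (l - 1)
  · intro h k hk
    rw [dom_iff_fsum _ _ (rowsK_sorted X k) (rowsK_sorted Y k)]
    intro m
    have hm := h k (m + 1) hk (by omega)
    rw [rects_eq_rowsK X k (m + 1) hk (by omega),
      rects_eq_rowsK Y k (m + 1) hk (by omega),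
      hfun _ (m + 1) (by omega), hfun _ (m + 1) (by omega)] at hm
    simpa using hm

lemma cols_dom_iff_rects (X Y : SkewShape) :
    (∀ l, 1 ≤ l → Dom (X.colsK l) (Y.colsK l)) ↔
      (∀ k l, 1 ≤ k → 1 ≤ l → X.rects k l ≤ Y.rects k l) := by
  constructor
  · intro h k l hk hl
    have := (rows_dom_iff_rects X.transpose Y.transpose).mp h l k hl hk
    rwa [rects_transpose, rects_transpose] at this
  · intro h l hl
    refine (rows_dom_iff_rects X.transpose Y.transpose).mpr ?_ l hl
    intro l' k' hl' hk'
    rw [rects_transpose, rects_transpose]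
    exact h k' l' hk' hl'

end Aux

/-- the equivalence in Proposition `pro:3measures`.
Let `A` and `B` be skew shapes.  The following three conditions are equivalent:
(i) `rows_k(A) ⊴ rows_k(B)` for all `k ≥ 1`;
(ii) `cols_l(A) ⊴ cols_l(B)` for all `l ≥ 1`;
(iii) `rects_{k,l}(A) ≤ rects_{k,l}(B)` for all `k, l ≥ 1`. -/
theorem rowsK_dom_iff_colsL_dom_iff_rects_le (A B : SkewShape) :
    ((∀ k, 1 ≤ k → Dom (A.rowsK k) (B.rowsK k)) ↔
      (∀ l, 1 ≤ l → Dom (A.colsK l) (B.colsK l))) ∧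
    ((∀ k, 1 ≤ k → Dom (A.rowsK k) (B.rowsK k)) ↔
      (∀ k l, 1 ≤ k → 1 ≤ l → A.rects k l ≤ B.rects k l)) := by
  constructor
  · exact (Aux.rows_dom_iff_rects A B).trans (Aux.cols_dom_iff_rects A B).symm
  · exact Aux.rows_dom_iff_rects A B
end

section
/- Let A be any skew shape and let k ≥ 2 be an integer. Then rows_{k−1}(trim(A)) = rows_k(A), where trim(A) is the skew shape obtained from A by deleting the top box of every non-empty column of A. -/
open Finset

lemma cells_subset_outer (A : SkewShape) : A.cells ⊆ A.outer.cells := by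
  intro c hc
  exact (Finset.mem_sdiff.mp hc).1

lemma cells_lt_numRows (A : SkewShape) {i j : ℕ} (h : (i, j) ∈ A.cells) : i < A.numRows := by
  have h1 : (i, j) ∈ A.outer := (YoungDiagram.mem_cells _).mp (cells_subset_outer A h)
  have h2 : i < A.outer.colLen j := YoungDiagram.mem_iff_lt_colLen.mp h1
  have h3 : A.outer.colLen j ≤ A.outer.colLen 0 := A.outer.colLen_anti 0 j (Nat.zero_le j)
  exact lt_of_lt_of_le h2 h3

lemma cells_lt_numCols (A : SkewShape) {i j : ℕ} (h : (i, j) ∈ A.cells) : j < A.numCols := by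
  have h1 : (i, j) ∈ A.outer := (YoungDiagram.mem_cells _).mp (cells_subset_outer A h)
  have h2 : j < A.outer.rowLen i := YoungDiagram.mem_iff_lt_rowLen.mp h1
  have h3 : A.outer.rowLen i ≤ A.outer.rowLen 0 := A.outer.rowLen_anti 0 i (Nat.zero_le i)
  exact lt_of_lt_of_le h2 h3

lemma overlap_eq_zero (A : SkewShape) (k i : ℕ) (hk : 1 ≤ k) (h : A.numRows < i + k) :
    A.overlap k i = 0 := by
  unfold SkewShape.overlap
  rw [Finset.card_eq_zero, Finset.filter_eq_empty_iff]
  intro j _ hall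
  have hm := hall (k - 1) (by omega)
  have := cells_lt_numRows A hm
  omega

lemma overlap_trim (A T : SkewShape) (hT : T.cells = trimCells A) (k : ℕ) (hk : 2 ≤ k)
    (i : ℕ) : T.overlap (k - 1) (i + 1) = A.overlap k i := by
  have hmemT : ∀ c, c ∈ T.cells ↔ (c ∈ A.cells ∧ 1 ≤ c.1 ∧ (c.1 - 1, c.2) ∈ A.cells) := by
    intro c
    rw [hT]
    unfold trimCells
    simp [Finset.mem_filter]
  have key : ∀ j, (∀ t, t < k - 1 → (i + 1 + t, j) ∈ T.cells) ↔
      (∀ t, t < k → (i + t, j) ∈ A.cells) := by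
    intro j
    constructor
    · intro h t ht
      rcases Nat.eq_zero_or_pos t with rfl | hpos
      · have := (hmemT _).mp (h 0 (by omega))
        simpa using this.2.2
      · have := (hmemT _).mp (h (t - 1) (by omega))
        have heq : i + 1 + (t - 1) = i + t := by omega
        rw [heq] at this
        exact this.1
    · intro h t ht
      rw [hmemT]
      refine ⟨?_, by omega, ?_⟩
      · have := h (t + 1) (by omega)
        simpa [Nat.add_assoc, Nat.add_comm 1 t] using this
      · have := h t (by omega)
        simpa [show i + 1 + t - 1 = i + t by omega] using this
  unfold SkewShape.overlap
  congr 1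
  apply Finset.ext
  intro j
  simp only [Finset.mem_filter, Finset.mem_range]
  constructor
  · rintro ⟨_, hq⟩
    have hp := (key j).mp hq
    exact ⟨cells_lt_numCols A (hp 0 (by omega)), hp⟩
  · rintro ⟨_, hp⟩
    have hq := (key j).mpr hp
    exact ⟨cells_lt_numCols T (hq 0 (by omega)), hq⟩

lemma filter_map_range_ext (f : ℕ → ℕ) (n m : ℕ) (hnm : n ≤ m)
    (h : ∀ i, n ≤ i → f i = 0) :
    ((List.range m).map f).filter (fun x => 0 < x) =
      ((List.range n).map f).filter (fun x => 0 < x) := by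
  obtain ⟨d, rfl⟩ := Nat.exists_eq_add_of_le hnm
  rw [List.range_add, List.map_append, List.filter_append]
  have : (((List.range d).map (fun x => n + x)).map f).filter (fun x => 0 < x) = [] := by
    rw [List.filter_eq_nil_iff]
    intro a ha
    simp only [List.mem_map, List.mem_range] at ha
    obtain ⟨b, ⟨c, _, rfl⟩, rfl⟩ := ha
    simp [h (n + c) (by omega)]
  rw [List.map_map] at this ⊢
  rw [this, List.append_nil]

/-- Lemma `lem:trim`.
Let `A` be any skew shape and let `k ≥ 2` be an integer.  Then
`rows_{k−1}(trim(A)) = rows_k(A)`, where `trim(A)` is the skew shape obtained from `A`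
by deleting the top box of every non-empty column of `A` (here `T` is any skew shape
whose set of boxes is that of `trim(A)`). -/
theorem rowsK_trim (A T : SkewShape) (hT : T.cells = trimCells A) (k : ℕ) (hk : 2 ≤ k) :
    T.rowsK (k - 1) = A.rowsK k := by
  unfold SkewShape.rowsK
  congr 1
  set g := T.overlap (k - 1) with hg
  set f := A.overlap k with hf
  set nT := T.numRows + 1 - (k - 1) with hnT
  set nA := A.numRows + 1 - k with hnA
  set N := nA + nT with hN
  have hgz : ∀ i, nT ≤ i → g i = 0 := fun i hi =>
    overlap_eq_zero T (k - 1) i (by omega) (by omega)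
  have hfz : ∀ i, nA ≤ i → f i = 0 := fun i hi =>
    overlap_eq_zero A k i (by omega) (by omega)
  have hg0 : g 0 = 0 := by
    rw [hg]
    unfold SkewShape.overlap
    rw [Finset.card_eq_zero, Finset.filter_eq_empty_iff]
    intro j _ hall
    have hm := hall 0 (by omega)
    rw [hT] at hm
    unfold trimCells at hm
    simp at hm
  have hkey : ∀ i, g (i + 1) = f i := fun i => overlap_trim A T hT k hk i
  calc ((List.range nT).map g).filter (fun x => 0 < x)
      = ((List.range (N + 1)).map g).filter (fun x => 0 < x) :=
        (filter_map_range_ext g nT (N + 1) (by omega) hgz).symm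
    _ = ((List.range nA).map f).filter (fun x => 0 < x) := by
        rw [List.range_succ_eq_map, List.map_cons, List.map_map]
        have : (List.range N).map (g ∘ Nat.succ) = (List.range N).map f := by
          apply List.map_congr_left
          intro a _
          exact hkey a
        rw [this, List.filter_cons]
        simp only [hg0]
        norm_num
        exact filter_map_range_ext f nA N (by omega) hfz
end

section
/- Let A and B be skew shapes. If supp(A) ⊇ supp(B), i.e., every partition appearing in the Schur expansion of s_B also appears in the Schur expansion of s_A, then rows_k(A) ⊴ rows_k(B) in the dominance order for all k ≥ 1. -/
open Finset

section Infrastructure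

open Finset

lemma cell_outer {A : SkewShape} {c : ℕ × ℕ} (hc : c ∈ A.cells) : c ∈ A.outer.cells :=
  (Finset.mem_sdiff.mp hc).1

lemma cell_row_lt {A : SkewShape} {c : ℕ × ℕ} (hc : c ∈ A.cells) : c.1 < A.numRows := by
  have h := cell_outer hc
  rw [YoungDiagram.mem_cells] at h
  have h2 : (c.1, c.2) ∈ A.outer := h
  rw [YoungDiagram.mem_iff_lt_colLen] at h2
  exact lt_of_lt_of_le h2 (A.outer.colLen_anti 0 c.2 (Nat.zero_le _))

lemma cell_col_lt {A : SkewShape} {c : ℕ × ℕ} (hc : c ∈ A.cells) : c.2 < A.numCols := by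
  have h := cell_outer hc
  rw [YoungDiagram.mem_cells] at h
  have h2 : (c.1, c.2) ∈ A.outer := h
  rw [YoungDiagram.mem_iff_lt_rowLen] at h2
  exact lt_of_lt_of_le h2 (A.outer.rowLen_anti 0 c.1 (Nat.zero_le _))

lemma readBefore_trichotomy (c c' : ℕ × ℕ) (h : c ≠ c') : readBefore c c' ∨ readBefore c' c := by
  obtain ⟨a, b⟩ := c; obtain ⟨a', b'⟩ := c'
  have h2 : a ≠ a' ∨ b ≠ b' := by
    by_contra hcon
    push_neg at hcon
    exact h (by rw [hcon.1, hcon.2])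
  simp only [readBefore]
  omega

lemma exists_read_max {s : Finset (ℕ × ℕ)} (hs : s.Nonempty) :
    ∃ cm ∈ s, ∀ c ∈ s, readBefore c cm ∨ c = cm := by
  classical
  obtain ⟨c0, hc0, hmax⟩ := s.exists_max_image (fun c => c.1) hs
  set s1 := s.filter (fun c => c.1 = c0.1) with hs1
  have hne : s1.Nonempty := ⟨c0, Finset.mem_filter.mpr ⟨hc0, rfl⟩⟩
  obtain ⟨cm, hcm, hmin⟩ := s1.exists_min_image (fun c => c.2) hne
  obtain ⟨hcm_s, hcm_row⟩ := Finset.mem_filter.mp hcm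
  refine ⟨cm, hcm_s, fun c hc => ?_⟩
  by_cases hrow : c.1 = cm.1
  · by_cases hcol : c.2 = cm.2
    · right
      exact Prod.ext hrow hcol
    · left
      have hc1 : c ∈ s1 := Finset.mem_filter.mpr ⟨hc, by omega⟩
      have := hmin c hc1
      exact Or.inr ⟨hrow, by omega⟩
  · left
    have := hmax c hc
    left
    omega

end Infrastructure

section PartI

open Finset

variable {A : SkewShape} (T : SkewSsyt A)

/-- Prefix-lattice property: among the first `r` rows, the number of entries equal to `e`
is at most the number of entries equal to `e - 1`. -/
lemma count_rows_lt_anti (hLR : IsLR T) {e r : ℕ} (he : 2 ≤ e) :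
    (A.cells.filter (fun c => T.entry c.1 c.2 = e ∧ c.1 < r)).card ≤
    (A.cells.filter (fun c => T.entry c.1 c.2 = e - 1 ∧ c.1 < r)).card := by
  classical
  set F := A.cells.filter (fun c => T.entry c.1 c.2 = e ∧ c.1 < r) with hF
  rcases F.eq_empty_or_nonempty with hemp | hne
  · rw [hemp]; simp
  obtain ⟨cm, hcm, hmaxall⟩ := exists_read_max hne
  obtain ⟨hcm_cells, hcm_e, hcm_r⟩ := Finset.mem_filter.mp hcm
  have hent : T.entry cm.1 cm.2 = (e - 2) + 2 := by omega
  have hlr := hLR cm hcm_cells (e - 2) hent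
  have h1 : F.card ≤
      (A.cells.filter (fun c' => T.entry c'.1 c'.2 = e - 2 + 2 ∧
        (readBefore c' cm ∨ c' = cm))).card := by
    apply Finset.card_le_card
    intro c hc
    obtain ⟨hc_cells, hc_e, hc_r⟩ := Finset.mem_filter.mp hc
    exact Finset.mem_filter.mpr ⟨hc_cells, by omega, hmaxall c hc⟩
  have h2 : (A.cells.filter (fun c' => T.entry c'.1 c'.2 = e - 2 + 1 ∧ readBefore c' cm)).card ≤
      (A.cells.filter (fun c => T.entry c.1 c.2 = e - 1 ∧ c.1 < r)).card := by
    apply Finset.card_le_card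
    intro c hc
    obtain ⟨hc_cells, hc_e, hc_b⟩ := Finset.mem_filter.mp hc
    refine Finset.mem_filter.mpr ⟨hc_cells, by omega, ?_⟩
    rcases hc_b with hlt | ⟨heq, _⟩
    · omega
    · omega
  exact le_trans h1 (le_trans hlr h2)

/-- Row lemma, single value: count of `e` in rows `< r` plus count of `e` in row `r`
is at most count of `e-1` in rows `< r`. -/
lemma row_value_lemma (hLR : IsLR T) {e r : ℕ} (he : 2 ≤ e) :
    (A.cells.filter (fun c => T.entry c.1 c.2 = e ∧ c.1 < r)).card +
    (A.cells.filter (fun c => T.entry c.1 c.2 = e ∧ c.1 = r)).card ≤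
    (A.cells.filter (fun c => T.entry c.1 c.2 = e - 1 ∧ c.1 < r)).card := by
  classical
  set S1 := A.cells.filter (fun c => T.entry c.1 c.2 = e ∧ c.1 = r) with hS1
  rcases S1.eq_empty_or_nonempty with hemp | hne
  · rw [hemp]; simpa using count_rows_lt_anti T hLR he
  obtain ⟨cm, hcm, hmin⟩ := S1.exists_min_image (fun c => c.2) hne
  obtain ⟨hcm_cells, hcm_e, hcm_r⟩ := Finset.mem_filter.mp hcm
  have hent : T.entry cm.1 cm.2 = (e - 2) + 2 := by omega
  have hlr := hLR cm hcm_cells (e - 2) hent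
  have hdisj : Disjoint (A.cells.filter (fun c => T.entry c.1 c.2 = e ∧ c.1 < r)) S1 := by
    rw [Finset.disjoint_left]
    intro c hc hc'
    have h1 := (Finset.mem_filter.mp hc).2.2
    have h2 := (Finset.mem_filter.mp hc').2.2
    omega
  have h1 : (A.cells.filter (fun c => T.entry c.1 c.2 = e ∧ c.1 < r)).card + S1.card ≤
      (A.cells.filter (fun c' => T.entry c'.1 c'.2 = e - 2 + 2 ∧
        (readBefore c' cm ∨ c' = cm))).card := by
    rw [← Finset.card_union_of_disjoint hdisj]
    apply Finset.card_le_card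
    intro c hc
    rcases Finset.mem_union.mp hc with hc1 | hc1
    · obtain ⟨hc_cells, hc_e, hc_r⟩ := Finset.mem_filter.mp hc1
      refine Finset.mem_filter.mpr ⟨hc_cells, by omega, Or.inl (Or.inl (by omega))⟩
    · obtain ⟨hc_cells, hc_e, hc_r⟩ := Finset.mem_filter.mp hc1
      refine Finset.mem_filter.mpr ⟨hc_cells, by omega, ?_⟩
      by_cases hcol : c.2 = cm.2
      · exact Or.inr (Prod.ext (by omega) hcol)
      · have := hmin c hc1
        exact Or.inl (Or.inr ⟨by omega, by omega⟩)
  have h2 : (A.cells.filter (fun c' => T.entry c'.1 c'.2 = e - 2 + 1 ∧ readBefore c' cm)).card ≤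
      (A.cells.filter (fun c => T.entry c.1 c.2 = e - 1 ∧ c.1 < r)).card := by
    apply Finset.card_le_card
    intro c hc
    obtain ⟨hc_cells, hc_e, hc_b⟩ := Finset.mem_filter.mp hc
    refine Finset.mem_filter.mpr ⟨hc_cells, by omega, ?_⟩
    rcases hc_b with hlt | ⟨heq, hgt⟩
    · omega
    · -- same row as cm, strictly to the right: entry ≥ e, contradiction
      exfalso
      have hcc : (cm.1, c.2) ∈ A.cells := by rw [← heq]; exact hc_cells
      have hmm : (cm.1, cm.2) ∈ A.cells := hcm_cells
      have hrw := T.row_weak cm.1 cm.2 c.2 (le_of_lt hgt) hmm hcc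
      have hec : T.entry cm.1 c.2 = T.entry c.1 c.2 := by rw [heq]
      omega
  exact le_trans h1 (le_trans hlr h2)

/-- Telescoped row lemma: the number of cells in row `r` with entry `> p` is at most the
number of cells in rows `< r` with entry `= p`. -/
lemma row_gt_lemma (hLR : IsLR T) {p r : ℕ} (hp : 1 ≤ p) :
    (A.cells.filter (fun c => c.1 = r ∧ p < T.entry c.1 c.2)).card ≤
    (A.cells.filter (fun c => T.entry c.1 c.2 = p ∧ c.1 < r)).card := by
  classical
  have aux : ∀ n : ℕ,
      (A.cells.filter (fun c => c.1 = r ∧ p < T.entry c.1 c.2 ∧ T.entry c.1 c.2 ≤ p + n)).card +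
      (A.cells.filter (fun c => T.entry c.1 c.2 = p + n ∧ c.1 < r)).card ≤
      (A.cells.filter (fun c => T.entry c.1 c.2 = p ∧ c.1 < r)).card := by
    intro n
    induction n with
    | zero =>
      have hemp : (A.cells.filter
          (fun c => c.1 = r ∧ p < T.entry c.1 c.2 ∧ T.entry c.1 c.2 ≤ p + 0)) = ∅ := by
        apply Finset.filter_false_of_mem
        intro c _
        omega
      rw [hemp]
      simp
    | succ n ih =>
      have hsplit : (A.cells.filter (fun c => c.1 = r ∧ p < T.entry c.1 c.2 ∧
          T.entry c.1 c.2 ≤ p + (n+1))) =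
          (A.cells.filter (fun c => c.1 = r ∧ p < T.entry c.1 c.2 ∧ T.entry c.1 c.2 ≤ p + n)) ∪
          (A.cells.filter (fun c => T.entry c.1 c.2 = p + (n+1) ∧ c.1 = r)) := by
        ext c
        simp only [Finset.mem_filter, Finset.mem_union]
        constructor
        · rintro ⟨hc, h1, h2, h3⟩
          by_cases h4 : T.entry c.1 c.2 = p + (n+1)
          · exact Or.inr ⟨hc, h4, h1⟩
          · exact Or.inl ⟨hc, h1, h2, by omega⟩
        · rintro (⟨hc, h1, h2, h3⟩ | ⟨hc, h1, h2⟩)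
          · exact ⟨hc, h1, h2, by omega⟩
          · exact ⟨hc, h2, by omega, by omega⟩
      have hdisj : Disjoint
          (A.cells.filter (fun c => c.1 = r ∧ p < T.entry c.1 c.2 ∧ T.entry c.1 c.2 ≤ p + n))
          (A.cells.filter (fun c => T.entry c.1 c.2 = p + (n+1) ∧ c.1 = r)) := by
        rw [Finset.disjoint_left]
        intro c hc hc'
        have h1 := (Finset.mem_filter.mp hc).2
        have h2 := (Finset.mem_filter.mp hc').2
        omega
      have hrow := row_value_lemma T hLR (e := p + (n+1)) (r := r) (by omega)
      have hpn : p + (n+1) - 1 = p + n := by omega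
      rw [hpn] at hrow
      calc (A.cells.filter (fun c => c.1 = r ∧ p < T.entry c.1 c.2 ∧
              T.entry c.1 c.2 ≤ p + (n+1))).card +
            (A.cells.filter (fun c => T.entry c.1 c.2 = p + (n+1) ∧ c.1 < r)).card
          = (A.cells.filter (fun c => c.1 = r ∧ p < T.entry c.1 c.2 ∧
              T.entry c.1 c.2 ≤ p + n)).card +
            ((A.cells.filter (fun c => T.entry c.1 c.2 = p + (n+1) ∧ c.1 = r)).card +
            (A.cells.filter (fun c => T.entry c.1 c.2 = p + (n+1) ∧ c.1 < r)).card) := by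
            rw [hsplit, Finset.card_union_of_disjoint hdisj]; ring
        _ ≤ (A.cells.filter (fun c => c.1 = r ∧ p < T.entry c.1 c.2 ∧
              T.entry c.1 c.2 ≤ p + n)).card +
            (A.cells.filter (fun c => T.entry c.1 c.2 = p + n ∧ c.1 < r)).card := by
            apply Nat.add_le_add_left
            calc (A.cells.filter (fun c => T.entry c.1 c.2 = p + (n+1) ∧ c.1 = r)).card +
                  (A.cells.filter (fun c => T.entry c.1 c.2 = p + (n+1) ∧ c.1 < r)).card
                = (A.cells.filter (fun c => T.entry c.1 c.2 = p + (n+1) ∧ c.1 < r)).card +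
                  (A.cells.filter (fun c => T.entry c.1 c.2 = p + (n+1) ∧ c.1 = r)).card := by ring
              _ ≤ _ := hrow
        _ ≤ _ := ih
  set E := A.cells.sup (fun c => T.entry c.1 c.2) with hE
  have hsub : (A.cells.filter (fun c => c.1 = r ∧ p < T.entry c.1 c.2)) ⊆
      (A.cells.filter (fun c => c.1 = r ∧ p < T.entry c.1 c.2 ∧ T.entry c.1 c.2 ≤ p + E)) := by
    intro c hc
    obtain ⟨hc_cells, h1, h2⟩ := Finset.mem_filter.mp hc
    refine Finset.mem_filter.mpr ⟨hc_cells, h1, h2, ?_⟩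
    have : T.entry c.1 c.2 ≤ E := Finset.le_sup (f := fun c : ℕ × ℕ => T.entry c.1 c.2) hc_cells
    omega
  calc (A.cells.filter (fun c => c.1 = r ∧ p < T.entry c.1 c.2)).card
      ≤ (A.cells.filter (fun c => c.1 = r ∧ p < T.entry c.1 c.2 ∧
          T.entry c.1 c.2 ≤ p + E)).card := Finset.card_le_card hsub
    _ ≤ _ := le_trans (Nat.le_add_right _ _) (aux E)

end PartI

section PartIb

open Finset

variable {A : SkewShape} (T : SkewSsyt A)

/-- In a column segment of `k` cells, the bottom entry is at least `k`. -/
lemma segment_entry {i j k : ℕ} (h : ∀ t, t < k → (i + t, j) ∈ A.cells) :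
    ∀ t, t < k → t + 1 ≤ T.entry (i + t) j := by
  intro t
  induction t with
  | zero => intro ht; exact T.pos i j (by simpa using h 0 ht)
  | succ t ih =>
    intro ht
    have h1 := ih (by omega)
    have h2 := T.col_strict (i + t) (i + t + 1) j (by omega) (h t (by omega)) (h (t+1) (by omega))
    have h3 : i + (t + 1) = i + t + 1 := by omega
    rw [h3]
    omega

lemma overlap_eq_card {A : SkewShape} {k i : ℕ} (hk : 1 ≤ k) :
    A.overlap k i =
      (A.cells.filter (fun c => c.1 = i + k - 1 ∧ ∀ t, t < k → (i + t, c.2) ∈ A.cells)).card := by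
  classical
  unfold SkewShape.overlap
  apply Finset.card_bij (fun j _ => (i + k - 1, j))
  · intro j hj
    obtain ⟨hjr, hjp⟩ := Finset.mem_filter.mp hj
    have hmem : (i + (k-1), j) ∈ A.cells := hjp (k-1) (by omega)
    have : i + k - 1 = i + (k - 1) := by omega
    refine Finset.mem_filter.mpr ⟨by rw [this]; exact hmem, rfl, hjp⟩
  · intro j1 hj1 j2 hj2 heq
    exact (Prod.mk.injEq _ _ _ _).mp heq |>.2
  · intro c hc
    obtain ⟨hc_cells, hc_row, hc_p⟩ := Finset.mem_filter.mp hc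
    refine ⟨c.2, Finset.mem_filter.mpr ⟨Finset.mem_range.mpr (cell_col_lt hc_cells), hc_p⟩, ?_⟩
    exact Prod.ext hc_row.symm rfl

lemma list_map_sum_eq (f : ℕ → ℕ) (l : List ℕ) :
    (l.map f).sum = ∑ s ∈ Finset.range l.length, f (l.getD s 0) := by
  induction l with
  | nil => simp
  | cons a l ih =>
    rw [List.map_cons, List.sum_cons, List.length_cons, Finset.sum_range_succ']
    simp only [List.getD_cons_succ, List.getD_cons_zero]
    rw [ih]
    ring

/-- Core counting bound: for any strictly increasing list of window start rows of length
`≤ m`, the total overlap is at most the number of cells with entry in `[k, k+m)`. -/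
lemma core_bound (hLR : IsLR T) {k m : ℕ} (hk : 1 ≤ k) (L : List ℕ)
    (hL : L.Pairwise (· < ·)) (hlen : L.length ≤ m) :
    (L.map (A.overlap k)).sum ≤
      (A.cells.filter (fun c => k ≤ T.entry c.1 c.2 ∧ T.entry c.1 c.2 < k + m)).card := by
  classical
  set Band := A.cells.filter (fun c => k ≤ T.entry c.1 c.2 ∧ T.entry c.1 c.2 < k + m) with hBand
  set idx := fun s => L.getD s 0 with hidxdef
  have hidx : ∀ {s t : ℕ}, s < t → t < L.length → idx s < idx t := by
    intro s t hst ht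
    have h1 : idx s = L[s] := List.getD_eq_getElem L 0 (by omega)
    have h2 : idx t = L[t] := List.getD_eq_getElem L 0 ht
    rw [h1, h2]
    exact List.pairwise_iff_getElem.mp hL s t (by omega) ht hst
  set r := fun s => idx s + k - 1 with hrdef
  set R : ℕ → Finset (ℕ × ℕ) := fun s =>
    A.cells.filter (fun c => c.1 = r s ∧ ∀ t, t < k → (idx s + t, c.2) ∈ A.cells) with hRdef
  set Rle : ℕ → Finset (ℕ × ℕ) := fun s => (R s).filter (fun c => T.entry c.1 c.2 ≤ k + s)
    with hRle
  set Q : ℕ → Finset (ℕ × ℕ) := fun s =>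
    A.cells.filter (fun c => T.entry c.1 c.2 = k + s ∧ c.1 < r s) with hQ
  set U : ℕ → Finset (ℕ × ℕ) := fun s => Rle s ∪ Q s with hU
  -- entry of cells in R s is at least k
  have hRk : ∀ s, ∀ c ∈ R s, k ≤ T.entry c.1 c.2 := by
    intro s c hc
    obtain ⟨hc_cells, hc_row, hc_p⟩ := Finset.mem_filter.mp hc
    simp only [hrdef] at hc_row
    have hseg := segment_entry T hc_p (k - 1) (by omega)
    have hrow : idx s + (k - 1) = c.1 := by omega
    rw [hrow] at hseg
    omega
  -- overlap ≤ card (U s)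
  have hov : ∀ s, s < L.length → A.overlap k (idx s) ≤ (U s).card := by
    intro s hs
    have h1 : A.overlap k (idx s) = (R s).card := overlap_eq_card hk
    have h2 : (R s).card = (Rle s).card +
        ((R s).filter (fun c => ¬ T.entry c.1 c.2 ≤ k + s)).card :=
      (Finset.card_filter_add_card_filter_not ..).symm
    have h3 : ((R s).filter (fun c => ¬ T.entry c.1 c.2 ≤ k + s)).card ≤
        (A.cells.filter (fun c => c.1 = r s ∧ k + s < T.entry c.1 c.2)).card := by
      apply Finset.card_le_card
      intro c hc
      obtain ⟨hcR, hcgt⟩ := Finset.mem_filter.mp hc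
      obtain ⟨hc_cells, hc_row, _⟩ := Finset.mem_filter.mp hcR
      exact Finset.mem_filter.mpr ⟨hc_cells, hc_row, by omega⟩
    have h4 : (A.cells.filter (fun c => c.1 = r s ∧ k + s < T.entry c.1 c.2)).card ≤
        (Q s).card := row_gt_lemma T hLR (p := k + s) (r := r s) (by omega)
    have h5 : (U s).card = (Rle s).card + (Q s).card := by
      rw [hU]
      apply Finset.card_union_of_disjoint
      rw [Finset.disjoint_left]
      intro c hc hc'
      obtain ⟨hcR, _⟩ := Finset.mem_filter.mp hc
      obtain ⟨_, hc_row, _⟩ := Finset.mem_filter.mp hcR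
      obtain ⟨_, _, hc_lt⟩ := Finset.mem_filter.mp hc'
      omega
    omega
  -- U s ⊆ Band
  have hUB : ∀ s, s < L.length → U s ⊆ Band := by
    intro s hs c hc
    rcases Finset.mem_union.mp hc with hc1 | hc1
    · obtain ⟨hcR, hcle⟩ := Finset.mem_filter.mp hc1
      obtain ⟨hc_cells, _, _⟩ := Finset.mem_filter.mp hcR
      have := hRk s c hcR
      exact Finset.mem_filter.mpr ⟨hc_cells, by omega, by omega⟩
    · obtain ⟨hc_cells, hce, _⟩ := Finset.mem_filter.mp hc1
      exact Finset.mem_filter.mpr ⟨hc_cells, by omega, by omega⟩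
  -- pairwise disjoint
  have hdisj : ∀ s ∈ Finset.range L.length, ∀ t ∈ Finset.range L.length, s ≠ t →
      Disjoint (U s) (U t) := by
    have key : ∀ {s t : ℕ}, s < t → t < L.length → Disjoint (U s) (U t) := by
      intro s t hst ht
      have hrst : r s < r t := by
        have := hidx hst ht
        simp only [hrdef]
        omega
      rw [Finset.disjoint_left]
      intro c hcs hct
      have hs_fact : (c.1 = r s ∧ T.entry c.1 c.2 ≤ k + s) ∨
          (T.entry c.1 c.2 = k + s ∧ c.1 < r s) := by
        rcases Finset.mem_union.mp hcs with h | h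
        · obtain ⟨hcR, hle⟩ := Finset.mem_filter.mp h
          obtain ⟨_, hrow, _⟩ := Finset.mem_filter.mp hcR
          exact Or.inl ⟨hrow, hle⟩
        · obtain ⟨_, h1, h2⟩ := Finset.mem_filter.mp h
          exact Or.inr ⟨h1, h2⟩
      have ht_fact : (c.1 = r t ∧ T.entry c.1 c.2 ≤ k + t) ∨
          (T.entry c.1 c.2 = k + t ∧ c.1 < r t) := by
        rcases Finset.mem_union.mp hct with h | h
        · obtain ⟨hcR, hle⟩ := Finset.mem_filter.mp h
          obtain ⟨_, hrow, _⟩ := Finset.mem_filter.mp hcR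
          exact Or.inl ⟨hrow, hle⟩
        · obtain ⟨_, h1, h2⟩ := Finset.mem_filter.mp h
          exact Or.inr ⟨h1, h2⟩
      omega
    intro s hs t ht hst
    rcases Nat.lt_or_ge s t with h | h
    · exact key h (Finset.mem_range.mp ht)
    · exact (key (by omega) (Finset.mem_range.mp hs)).symm
  -- assemble
  have hsum : ∑ s ∈ Finset.range L.length, (U s).card ≤ Band.card := by
    rw [← Finset.card_biUnion hdisj]
    apply Finset.card_le_card
    intro c hc
    obtain ⟨s, hs, hcs⟩ := Finset.mem_biUnion.mp hc
    exact hUB s (Finset.mem_range.mp hs) hcs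
  calc (L.map (A.overlap k)).sum
      = ∑ s ∈ Finset.range L.length, A.overlap k (idx s) := list_map_sum_eq _ _
    _ ≤ ∑ s ∈ Finset.range L.length, (U s).card :=
        Finset.sum_le_sum (fun s hs => hov s (Finset.mem_range.mp hs))
    _ ≤ Band.card := hsum

end PartIb

section PartIc

open Finset

variable {A : SkewShape} (T : SkewSsyt A)

lemma band_card {k m : ℕ} :
    (A.cells.filter (fun c => k ≤ T.entry c.1 c.2 ∧ T.entry c.1 c.2 < k + m)).card =
      ∑ j ∈ Finset.range m, contentCount T (k + j) := by
  classical
  induction m with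
  | zero =>
    rw [Finset.sum_range_zero, Finset.card_eq_zero]
    apply Finset.filter_false_of_mem
    intro c _
    omega
  | succ m ih =>
    rw [Finset.sum_range_succ, ← ih]
    have hsplit : (A.cells.filter (fun c => k ≤ T.entry c.1 c.2 ∧ T.entry c.1 c.2 < k + (m+1))) =
        (A.cells.filter (fun c => k ≤ T.entry c.1 c.2 ∧ T.entry c.1 c.2 < k + m)) ∪
        (A.cells.filter (fun c => T.entry c.1 c.2 = k + m)) := by
      ext c
      simp only [Finset.mem_filter, Finset.mem_union]
      constructor
      · rintro ⟨hc, h1, h2⟩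
        by_cases h3 : T.entry c.1 c.2 = k + m
        · exact Or.inr ⟨hc, h3⟩
        · exact Or.inl ⟨hc, h1, by omega⟩
      · rintro (⟨hc, h1, h2⟩ | ⟨hc, h1⟩)
        · exact ⟨hc, h1, by omega⟩
        · exact ⟨hc, by omega, by omega⟩
    have hdisj : Disjoint
        (A.cells.filter (fun c => k ≤ T.entry c.1 c.2 ∧ T.entry c.1 c.2 < k + m))
        (A.cells.filter (fun c => T.entry c.1 c.2 = k + m)) := by
      rw [Finset.disjoint_left]
      intro c hc hc'
      have h1 := (Finset.mem_filter.mp hc).2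
      have h2 := (Finset.mem_filter.mp hc').2
      omega
    rw [hsplit, Finset.card_union_of_disjoint hdisj]
    rfl

/-- Part I conclusion: for an LR filling of `A` of content `ν`, the sum of the `m` largest
`k`-overlaps of `A` is at most `ν_k + ⋯ + ν_{k+m-1}`. -/
lemma partI {ν : List ℕ} (hLR : IsLR T) (hc : HasContent T ν) {k m : ℕ} (hk : 1 ≤ k) :
    ((A.rowsK k).take m).sum ≤ ∑ j ∈ Finset.range m, ν.getD (k - 1 + j) 0 := by
  classical
  have hband : ∑ j ∈ Finset.range m, ν.getD (k - 1 + j) 0 =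
      (A.cells.filter (fun c => k ≤ T.entry c.1 c.2 ∧ T.entry c.1 c.2 < k + m)).card := by
    rw [band_card T]
    apply Finset.sum_congr rfl
    intro j _
    have h1 : k + j = (k - 1 + j) + 1 := by omega
    rw [h1, hc (k - 1 + j)]
  rw [hband]
  have hsubperm : List.Subperm ((A.rowsK k).take m)
      ((List.range (A.numRows + 1 - k)).map (A.overlap k)) := by
    unfold SkewShape.rowsK sortDesc
    refine List.Subperm.trans ?_
      ((List.filter_sublist (p := fun x => decide (0 < x))
        (l := (List.range (A.numRows + 1 - k)).map (A.overlap k))).subperm)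
    exact ((List.take_sublist m _).subperm).trans (List.mergeSort_perm _ _).subperm
  obtain ⟨l', hperm, hsub⟩ := hsubperm
  obtain ⟨r', hr'sub, rfl⟩ := List.sublist_map_iff.mp hsub
  have hpair : r'.Pairwise (· < ·) := List.pairwise_lt_range.sublist hr'sub
  have hlen : r'.length ≤ m := by
    have h1 := hperm.length_eq
    rw [List.length_map] at h1
    rw [h1, List.length_take]
    omega
  calc ((A.rowsK k).take m).sum = (r'.map (A.overlap k)).sum := hperm.symm.sum_eq
    _ ≤ _ := core_bound T hLR hk r' hpair hlen

end PartIc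

section PartIIa

open Finset

/-- Row length of the outer shape. -/
def lamF (B : SkewShape) (i : ℕ) : ℕ := B.outer.rowLen i
/-- Row length of the inner shape. -/
def muF (B : SkewShape) (i : ℕ) : ℕ := B.inner.rowLen i

lemma lam_anti (B : SkewShape) {i1 i2 : ℕ} (h : i1 ≤ i2) : lamF B i2 ≤ lamF B i1 :=
  B.outer.rowLen_anti i1 i2 h

lemma mu_anti (B : SkewShape) {i1 i2 : ℕ} (h : i1 ≤ i2) : muF B i2 ≤ muF B i1 :=
  B.inner.rowLen_anti i1 i2 h

lemma mem_cells_iff (B : SkewShape) {i j : ℕ} :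
    (i, j) ∈ B.cells ↔ muF B i ≤ j ∧ j < lamF B i := by
  unfold SkewShape.cells
  rw [Finset.mem_sdiff, YoungDiagram.mem_cells, YoungDiagram.mem_cells,
    YoungDiagram.mem_iff_lt_rowLen, YoungDiagram.mem_iff_lt_rowLen]
  unfold lamF muF
  omega

lemma mu_le_lam (B : SkewShape) (i : ℕ) : muF B i ≤ lamF B i := by
  unfold muF lamF
  rcases Nat.eq_zero_or_pos (B.inner.rowLen i) with h | h
  · omega
  · have h1 : (i, B.inner.rowLen i - 1) ∈ B.inner := by
      rw [YoungDiagram.mem_iff_lt_rowLen]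
      omega
    have h2 := B.le h1
    rw [YoungDiagram.mem_iff_lt_rowLen] at h2
    omega

/-- The depth of the box `(i,j)`: the number of consecutive boxes of the column `j`
weakly above row `i` (including itself). -/
def depF (B : SkewShape) (i j : ℕ) : ℕ :=
  ((Finset.range (i+1)).filter (fun t => muF B (i - t) ≤ j)).card

lemma down_closed_eq_range (S : Finset ℕ) (h : ∀ t ∈ S, ∀ t', t' ≤ t → t' ∈ S) :
    S = Finset.range S.card := by
  classical
  induction S using Finset.induction_on_max with
  | empty => simp
  | insert a s ha ih =>
    have hs : ∀ t ∈ s, ∀ t', t' ≤ t → t' ∈ s := by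
      intro t ht t' ht'
      have h1 : t' ∈ insert a s := h t (Finset.mem_insert_of_mem ht) t' ht'
      rcases Finset.mem_insert.mp h1 with h2 | h2
      · exfalso; have := ha t ht; omega
      · exact h2
    have hrange := ih hs
    have hcardle : s.card ≤ a := by
      by_contra hcon
      have : a ∈ Finset.range s.card := Finset.mem_range.mpr (by omega)
      rw [← hrange] at this
      have := ha a this
      omega
    have hsub : Finset.range a ⊆ s := by
      intro x hx
      have hxa : x < a := Finset.mem_range.mp hx
      have h1 : x ∈ insert a s := h a (Finset.mem_insert_self a s) x (by omega)
      rcases Finset.mem_insert.mp h1 with h2 | h2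
      · omega
      · exact h2
    have hcardge : a ≤ s.card := by
      have := Finset.card_le_card hsub
      rwa [Finset.card_range] at this
    have haeq : a = s.card := by omega
    have hanotin : a ∉ s := by
      intro hcon; have := ha a hcon; omega
    rw [Finset.card_insert_of_notMem hanotin, hrange, ← haeq]
    ext x
    simp only [Finset.mem_insert, Finset.mem_range, Finset.card_range]
    omega

lemma dep_filter_eq_range (B : SkewShape) (i j : ℕ) :
    ((Finset.range (i+1)).filter (fun t => muF B (i - t) ≤ j)) =
      Finset.range (depF B i j) := by
  apply down_closed_eq_range
  intro t ht t' ht'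
  obtain ⟨htr, htp⟩ := Finset.mem_filter.mp ht
  refine Finset.mem_filter.mpr ⟨Finset.mem_range.mpr (by have := Finset.mem_range.mp htr; omega), ?_⟩
  exact le_trans (mu_anti B (by omega)) htp

lemma dep_ge_iff (B : SkewShape) {i j d : ℕ} (hd : 1 ≤ d) :
    d ≤ depF B i j ↔ d ≤ i + 1 ∧ muF B (i + 1 - d) ≤ j := by
  have h1 : d ≤ depF B i j ↔ (d - 1) ∈ Finset.range (depF B i j) := by
    rw [Finset.mem_range]; omega
  rw [h1, ← dep_filter_eq_range B i j, Finset.mem_filter, Finset.mem_range]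
  have h2 : i - (d - 1) = i + 1 - d := by omega
  rw [h2]
  omega

lemma dep_pos (B : SkewShape) {i j : ℕ} (h : (i, j) ∈ B.cells) : 1 ≤ depF B i j := by
  rw [dep_ge_iff B (by omega)]
  have := (mem_cells_iff B).mp h
  simp only [Nat.add_sub_cancel]
  omega

lemma dep_le (B : SkewShape) (i j : ℕ) : depF B i j ≤ i + 1 := by
  unfold depF
  calc _ ≤ (Finset.range (i+1)).card := Finset.card_le_card (Finset.filter_subset _ _)
    _ = i + 1 := Finset.card_range _

lemma dep_succ (B : SkewShape) {i j : ℕ} (h1 : (i, j) ∈ B.cells) (h2 : (i+1, j) ∈ B.cells) :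
    depF B (i+1) j = depF B i j + 1 := by
  classical
  have key : ((Finset.range (i+2)).filter (fun t => muF B (i + 1 - t) ≤ j)) =
      insert 0 (((Finset.range (i+1)).filter (fun t => muF B (i - t) ≤ j)).image (· + 1)) := by
    ext t
    simp only [Finset.mem_filter, Finset.mem_range, Finset.mem_insert, Finset.mem_image]
    constructor
    · rintro ⟨htr, htp⟩
      rcases Nat.eq_zero_or_pos t with h0 | h0
      · exact Or.inl h0
      · refine Or.inr ⟨t - 1, ⟨by omega, ?_⟩, by omega⟩
        have : i - (t - 1) = i + 1 - t := by omega
        rw [this]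
        exact htp
    · rintro (h0 | ⟨t', ⟨ht'r, ht'p⟩, ht'⟩)
      · subst h0
        refine ⟨by omega, ?_⟩
        simp only [Nat.sub_zero]
        exact ((mem_cells_iff B).mp h2).1
      · subst ht'
        refine ⟨by omega, ?_⟩
        have : i + 1 - (t' + 1) = i - t' := by omega
        rw [this]
        exact ht'p
  unfold depF
  rw [key, Finset.card_insert_of_notMem (by simp),
    Finset.card_image_of_injective _ (fun a b h => by omega)]

lemma dep_row_mono (B : SkewShape) {i j1 j2 : ℕ} (h : j1 ≤ j2) :
    depF B i j1 ≤ depF B i j2 := by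
  unfold depF
  apply Finset.card_le_card
  intro t ht
  obtain ⟨h1, h2⟩ := Finset.mem_filter.mp ht
  exact Finset.mem_filter.mpr ⟨h1, by omega⟩

lemma dep_pred (B : SkewShape) {i j : ℕ} (hm : (i, j) ∈ B.cells) (h : 2 ≤ depF B i j) :
    1 ≤ i ∧ (i - 1, j) ∈ B.cells ∧ depF B (i - 1) j = depF B i j - 1 := by
  have h1 := (dep_ge_iff B (by omega : (1:ℕ) ≤ 2)).mp h
  have hi : 1 ≤ i := by omega
  have hmem : (i - 1, j) ∈ B.cells := by
    rw [mem_cells_iff]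
    have h2 : i + 1 - 2 = i - 1 := by omega
    rw [h2] at h1
    have h3 := (mem_cells_iff B).mp hm
    have h4 : lamF B i ≤ lamF B (i - 1) := lam_anti B (by omega)
    omega
  have h5 := dep_succ B hmem (by rw [show i - 1 + 1 = i from by omega]; exact hm)
  rw [show i - 1 + 1 = i from by omega] at h5
  exact ⟨hi, hmem, by omega⟩

/-- The "window length" ending at row `i`: the number of cells of row `i` of depth `≥ k`. -/
def ovF (B : SkewShape) (k i : ℕ) : ℕ :=
  if i + 1 < k then 0 else lamF B i - muF B (i + 1 - k)

/-- The number of rows before `i` whose window length is at least `q`. -/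
def npF (B : SkewShape) (k i q : ℕ) : ℕ :=
  ((Finset.range i).filter (fun i' => q ≤ ovF B k i')).card

lemma np_anti (B : SkewShape) (k i : ℕ) {q q' : ℕ} (h : q ≤ q') :
    npF B k i q' ≤ npF B k i q := by
  unfold npF
  apply Finset.card_le_card
  intro x hx
  obtain ⟨h1, h2⟩ := Finset.mem_filter.mp hx
  exact Finset.mem_filter.mpr ⟨h1, by omega⟩

lemma np_succ_row (B : SkewShape) (k i q : ℕ) :
    npF B k (i+1) q = npF B k i q + (if q ≤ ovF B k i then 1 else 0) := by
  classical
  unfold npF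
  rw [Finset.range_add_one, Finset.filter_insert]
  by_cases h : q ≤ ovF B k i
  · rw [if_pos h, if_pos h, Finset.card_insert_of_notMem]
    simp only [Finset.mem_filter, Finset.mem_range]
    omega
  · rw [if_neg h, if_neg h, Nat.add_zero]

/-- The entry of the canonical filling adapted to window size `k`. -/
def entF (B : SkewShape) (k i j : ℕ) : ℕ :=
  if (i, j) ∈ B.cells then
    (if depF B i j < k then depF B i j else k + npF B k i (lamF B i - j))
  else 0

lemma ent_spec (B : SkewShape) (k : ℕ) {i j : ℕ} (hm : (i, j) ∈ B.cells) :
    (depF B i j < k ∧ entF B k i j = depF B i j) ∨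
    (k ≤ depF B i j ∧ entF B k i j = k + npF B k i (lamF B i - j)) := by
  unfold entF
  rw [if_pos hm]
  by_cases h : depF B i j < k
  · left; exact ⟨h, if_pos h⟩
  · right; exact ⟨by omega, if_neg h⟩

lemma deep_facts (B : SkewShape) {k i j : ℕ} (hk : 1 ≤ k) (hm : (i, j) ∈ B.cells)
    (hd : k ≤ depF B i j) :
    k ≤ i + 1 ∧ muF B (i + 1 - k) ≤ j ∧ 1 ≤ lamF B i - j ∧ lamF B i - j ≤ ovF B k i ∧
      ovF B k i = lamF B i - muF B (i + 1 - k) := by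
  have h1 := (dep_ge_iff B hk).mp hd
  have h2 := (mem_cells_iff B).mp hm
  have h3 : ovF B k i = lamF B i - muF B (i + 1 - k) := by
    unfold ovF; rw [if_neg (by omega)]
  refine ⟨h1.1, h1.2, by omega, ?_, h3⟩
  rw [h3]
  omega

lemma deep_of_q (B : SkewShape) {k i q : ℕ} (hk : 1 ≤ k) (hq1 : 1 ≤ q) (hq2 : q ≤ ovF B k i) :
    (i, lamF B i - q) ∈ B.cells ∧ k ≤ depF B i (lamF B i - q) ∧
      lamF B i - (lamF B i - q) = q := by
  have hov : ¬ (i + 1 < k) := by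
    by_contra hcon
    unfold ovF at hq2
    rw [if_pos hcon] at hq2
    omega
  have hove : ovF B k i = lamF B i - muF B (i + 1 - k) := by
    unfold ovF; rw [if_neg hov]
  rw [hove] at hq2
  have hmu : muF B (i + 1 - k) ≤ lamF B i - q := by omega
  have hmu2 : muF B i ≤ muF B (i + 1 - k) := mu_anti B (by omega)
  have hqlam : q ≤ lamF B i := by omega
  refine ⟨(mem_cells_iff B).mpr ⟨by omega, by omega⟩, ?_, by omega⟩
  rw [dep_ge_iff B hk]
  exact ⟨by omega, hmu⟩

lemma ent_adj (B : SkewShape) {k i j : ℕ} (hk : 1 ≤ k) (h1 : (i, j) ∈ B.cells)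
    (h2 : (i+1, j) ∈ B.cells) : entF B k i j < entF B k (i+1) j := by
  have hds := dep_succ B h1 h2
  rcases ent_spec B k h2 with ⟨hsh, he⟩ | ⟨hdp, he⟩
  · -- below shallow, hence above shallow
    rcases ent_spec B k h1 with ⟨hsh1, he1⟩ | ⟨hdp1, he1⟩
    · omega
    · omega
  · rcases ent_spec B k h1 with ⟨hsh1, he1⟩ | ⟨hdp1, he1⟩
    · -- above shallow, below deep
      omega
    · -- both deep
      rw [he, he1]
      obtain ⟨_, _, hjr1, hjr2, _⟩ := deep_facts B hk h1 hdp1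
      have hlam : lamF B (i+1) ≤ lamF B i := lam_anti B (by omega)
      have hq' : lamF B (i+1) - j ≤ lamF B i - j := by omega
      have hnp1 : npF B k (i+1) (lamF B (i+1) - j) =
          npF B k i (lamF B (i+1) - j) + 1 := by
        rw [np_succ_row, if_pos (by omega)]
      have hnp2 : npF B k i (lamF B i - j) ≤ npF B k i (lamF B (i+1) - j) :=
        np_anti B k i hq'
      omega

lemma cells_contig (B : SkewShape) {i1 i i2 j : ℕ} (ha : i1 ≤ i) (hb : i ≤ i2)
    (h1 : (i1, j) ∈ B.cells) (h2 : (i2, j) ∈ B.cells) : (i, j) ∈ B.cells := by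
  rw [mem_cells_iff] at *
  have := mu_anti B ha
  have := lam_anti B hb
  omega

lemma ent_col_strict (B : SkewShape) {k : ℕ} (hk : 1 ≤ k) :
    ∀ i1 i2 j, i1 < i2 → (i1, j) ∈ B.cells → (i2, j) ∈ B.cells →
      entF B k i1 j < entF B k i2 j := by
  have aux : ∀ d i1 j, (i1, j) ∈ B.cells → (i1 + d + 1, j) ∈ B.cells →
      entF B k i1 j < entF B k (i1 + d + 1) j := by
    intro d
    induction d with
    | zero => intro i1 j h1 h2; exact ent_adj B hk h1 h2
    | succ d ih =>
      intro i1 j h1 h2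
      have hmid : (i1 + d + 1, j) ∈ B.cells := cells_contig B (by omega) (by omega) h1 h2
      have ha := ih i1 j h1 hmid
      have hb := ent_adj B hk hmid (by rw [show i1 + d + 1 + 1 = i1 + (d+1) + 1 from by omega]; exact h2)
      have hc : i1 + (d + 1) + 1 = i1 + d + 1 + 1 := by omega
      rw [hc]
      omega
  intro i1 i2 j h12 h1 h2
  have h3 : i2 = i1 + (i2 - i1 - 1) + 1 := by omega
  rw [h3] at h2 ⊢
  exact aux _ i1 j h1 h2

/-- The canonical `k`-adapted LR filling of `B`. -/
def TB (B : SkewShape) (k : ℕ) (hk : 1 ≤ k) : SkewSsyt B where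
  entry := entF B k
  pos := by
    intro i j hm
    rcases ent_spec B k hm with ⟨_, he⟩ | ⟨_, he⟩
    · have := dep_pos B hm; omega
    · omega
  zeros := by
    intro i j hm
    unfold entF
    rw [if_neg hm]
  row_weak := by
    intro i j1 j2 hj h1 h2
    have hmono := dep_row_mono B (i := i) hj
    rcases ent_spec B k h1 with ⟨hs1, he1⟩ | ⟨hd1, he1⟩
    · rcases ent_spec B k h2 with ⟨hs2, he2⟩ | ⟨hd2, he2⟩
      · omega
      · omega
    · rcases ent_spec B k h2 with ⟨hs2, he2⟩ | ⟨hd2, he2⟩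
      · omega
      · rw [he1, he2]
        have := np_anti B k i (show lamF B i - j2 ≤ lamF B i - j1 by omega)
        omega
  col_strict := by
    intro i1 i2 j h12 h1 h2
    exact ent_col_strict B hk i1 i2 j h12 h1 h2

end PartIIa

section PartIIb

open Finset

lemma ov_le_lam (B : SkewShape) (k i : ℕ) : ovF B k i ≤ lamF B i := by
  unfold ovF
  split <;> omega

lemma max_getD_spec (S : Finset ℕ) (h : S.Nonempty) :
    S.max.getD 0 ∈ S ∧ ∀ x ∈ S, x ≤ S.max.getD 0 := by
  obtain ⟨b, hb⟩ := S.max_of_nonempty h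
  have hb2 : S.max.getD 0 = b := by rw [hb]; rfl
  rw [hb2]
  constructor
  · exact Finset.mem_of_max hb
  · intro x hx
    have h1 := Finset.le_max hx
    rw [hb] at h1
    exact_mod_cast h1

lemma ent_ne_zero_mem (B : SkewShape) {k i j : ℕ} (h : entF B k i j ≠ 0) :
    (i, j) ∈ B.cells := by
  by_contra hcon
  apply h
  unfold entF
  rw [if_neg hcon]

/-- `npF` decomposition at the last previous row with `ov ≥ q`. -/
lemma np_pred (B : SkewShape) {k i q p : ℕ} (hp : 1 ≤ p) (hnp : npF B k i q = p) :
    ∃ i'', i'' < i ∧ q ≤ ovF B k i'' ∧ npF B k i'' q = p - 1 ∧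
      ∀ x, x < i → q ≤ ovF B k x → x ≤ i'' := by
  classical
  set S := (Finset.range i).filter (fun x => q ≤ ovF B k x) with hS
  have hcard : S.card = p := hnp
  have hne : S.Nonempty := by
    rw [← Finset.card_pos, hcard]; omega
  obtain ⟨hmem, hmax⟩ := max_getD_spec S hne
  set z := S.max.getD 0 with hz
  obtain ⟨hzr, hzp⟩ := Finset.mem_filter.mp hmem
  have hzi : z < i := Finset.mem_range.mp hzr
  have hins : S = insert z ((Finset.range z).filter (fun x => q ≤ ovF B k x)) := by
    ext x
    simp only [hS, Finset.mem_filter, Finset.mem_range, Finset.mem_insert]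
    constructor
    · rintro ⟨h1, h2⟩
      have hxz : x ≤ z := hmax x (Finset.mem_filter.mpr ⟨Finset.mem_range.mpr h1, h2⟩)
      rcases Nat.eq_or_lt_of_le hxz with h3 | h3
      · exact Or.inl h3
      · exact Or.inr ⟨h3, h2⟩
    · rintro (h1 | ⟨h1, h2⟩)
      · subst h1; exact ⟨hzi, hzp⟩
      · exact ⟨by omega, h2⟩
  have hnotmem : z ∉ (Finset.range z).filter (fun x => q ≤ ovF B k x) := by
    simp only [Finset.mem_filter, Finset.mem_range]
    omega
  have hcard2 : S.card = ((Finset.range z).filter (fun x => q ≤ ovF B k x)).card + 1 := by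
    rw [hins, Finset.card_insert_of_notMem hnotmem]
  refine ⟨z, hzi, hzp, ?_, ?_⟩
  · unfold npF
    omega
  · intro x hx hq
    exact hmax x (Finset.mem_filter.mpr ⟨Finset.mem_range.mpr hx, hq⟩)

lemma np_row_lt (B : SkewShape) {k q i1 i2 : ℕ} (h : i1 < i2) (hq : q ≤ ovF B k i1) :
    npF B k i1 q < npF B k i2 q := by
  classical
  unfold npF
  have hsub : insert i1 ((Finset.range i1).filter (fun x => q ≤ ovF B k x)) ⊆
      (Finset.range i2).filter (fun x => q ≤ ovF B k x) := by
    intro x hx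
    rcases Finset.mem_insert.mp hx with h1 | h1
    · subst h1; exact Finset.mem_filter.mpr ⟨Finset.mem_range.mpr h, hq⟩
    · obtain ⟨h2, h3⟩ := Finset.mem_filter.mp h1
      exact Finset.mem_filter.mpr ⟨Finset.mem_range.mpr (by
        have := Finset.mem_range.mp h2; omega), h3⟩
  have hnotmem : i1 ∉ (Finset.range i1).filter (fun x => q ≤ ovF B k x) := by
    simp only [Finset.mem_filter, Finset.mem_range]
    omega
  have := Finset.card_le_card hsub
  rw [Finset.card_insert_of_notMem hnotmem] at this
  omega

lemma TB_isLR (B : SkewShape) (k : ℕ) (hk : 1 ≤ k) : IsLR (TB B k hk) := by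
  classical
  intro c hc v hent
  have hentry : (TB B k hk).entry = entF B k := rfl
  rw [hentry] at hent
  simp only [hentry]
  -- facts about elements of the LHS filter
  have lhs_fact : ∀ c' ∈ B.cells.filter (fun c' => entF B k c'.1 c'.2 = v + 2 ∧
      (readBefore c' c ∨ c' = c)), c'.1 ≤ c.1 ∧ entF B k c'.1 c'.2 = v + 2 ∧ c' ∈ B.cells := by
    intro c' hc'
    obtain ⟨h1, h2, h3⟩ := Finset.mem_filter.mp hc'
    refine ⟨?_, h2, h1⟩
    rcases h3 with h3 | h3
    · rcases h3 with h3 | ⟨h3, _⟩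
      · omega
      · omega
    · rw [h3]
  rcases Nat.lt_or_ge (v + 2) k with hcase | hcase
  · -- Case 1: shallow entries
    apply Finset.card_le_card_of_injOn (fun c' => (c'.1 - 1, c'.2))
    · intro c' hc'
      obtain ⟨hrow, he, hmem⟩ := lhs_fact c' hc'
      have hcell : (c'.1, c'.2) ∈ B.cells := hmem
      have hdep : depF B c'.1 c'.2 = v + 2 := by
        rcases ent_spec B k hcell with ⟨h1, h2⟩ | ⟨h1, h2⟩
        · omega
        · omega
      obtain ⟨hi1, habove, hdab⟩ := dep_pred B hcell (by omega)
      have hentab : entF B k (c'.1 - 1) c'.2 = v + 1 := by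
        rcases ent_spec B k habove with ⟨h1, h2⟩ | ⟨h1, h2⟩
        · omega
        · omega
      refine Finset.mem_filter.mpr ⟨habove, hentab, Or.inl ?_⟩
      -- c'.1 - 1 < c.1 : since c'.1 ≤ c.1 and if c'.1 = c.1... need c'.1 - 1 < c.1
      dsimp only
      omega
    · intro c1 hc1 c2 hc2 heq
      obtain ⟨_, he1, hm1⟩ := lhs_fact c1 hc1
      obtain ⟨_, he2, hm2⟩ := lhs_fact c2 hc2
      have hd1 : depF B c1.1 c1.2 = v + 2 := by
        rcases ent_spec B k hm1 with ⟨h1, h2⟩ | ⟨h1, h2⟩ <;> omega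
      have hd2 : depF B c2.1 c2.2 = v + 2 := by
        rcases ent_spec B k hm2 with ⟨h1, h2⟩ | ⟨h1, h2⟩ <;> omega
      have hi1 : 1 ≤ c1.1 := (dep_pred B hm1 (by omega)).1
      have hi2 : 1 ≤ c2.1 := (dep_pred B hm2 (by omega)).1
      have h1 := congrArg Prod.fst heq
      have h2 := congrArg Prod.snd heq
      simp only [] at h1 h2
      exact Prod.ext (by omega) h2
  rcases Nat.eq_or_lt_of_le hcase with hcase2 | hcase2
  · -- Case 2: entry = k, np = 0, above cell is shallow of depth k - 1
    apply Finset.card_le_card_of_injOn (fun c' => (c'.1 - 1, c'.2))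
    · intro c' hc'
      obtain ⟨hrow, he, hmem⟩ := lhs_fact c' hc'
      have hcell : (c'.1, c'.2) ∈ B.cells := hmem
      have hdeep : k ≤ depF B c'.1 c'.2 ∧ npF B k c'.1 (lamF B c'.1 - c'.2) = 0 := by
        rcases ent_spec B k hcell with ⟨h1, h2⟩ | ⟨h1, h2⟩
        · omega
        · exact ⟨h1, by omega⟩
      obtain ⟨hi1, habove, hdab⟩ := dep_pred B hcell (by omega)
      -- above cell must be shallow
      have hshal : depF B (c'.1 - 1) c'.2 < k := by
        by_contra hcon
        have hdf := deep_facts B hk habove (by omega)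
        have hq : lamF B c'.1 - c'.2 ≤ ovF B k (c'.1 - 1) := by
          have h1 : lamF B c'.1 ≤ lamF B (c'.1 - 1) := lam_anti B (by omega)
          omega
        have : npF B k c'.1 (lamF B c'.1 - c'.2) ≠ 0 := by
          have hpos : 0 < npF B k c'.1 (lamF B c'.1 - c'.2) := by
            unfold npF
            rw [Finset.card_pos]
            exact ⟨c'.1 - 1, Finset.mem_filter.mpr ⟨Finset.mem_range.mpr (by omega), hq⟩⟩
          omega
        exact this hdeep.2
      have hentab : entF B k (c'.1 - 1) c'.2 = v + 1 := by
        rcases ent_spec B k habove with ⟨h1, h2⟩ | ⟨h1, h2⟩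
        · omega
        · omega
      exact Finset.mem_filter.mpr ⟨habove, hentab, Or.inl (by dsimp only; omega)⟩
    · intro c1 hc1 c2 hc2 heq
      obtain ⟨_, he1, hm1⟩ := lhs_fact c1 hc1
      obtain ⟨_, he2, hm2⟩ := lhs_fact c2 hc2
      have hd1 : k ≤ depF B c1.1 c1.2 := by
        rcases ent_spec B k hm1 with ⟨h1, h2⟩ | ⟨h1, h2⟩ <;> omega
      have hd2 : k ≤ depF B c2.1 c2.2 := by
        rcases ent_spec B k hm2 with ⟨h1, h2⟩ | ⟨h1, h2⟩ <;> omega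
      have hi1 : 1 ≤ c1.1 := (dep_pred B hm1 (by omega)).1
      have hi2 : 1 ≤ c2.1 := (dep_pred B hm2 (by omega)).1
      have h1 := congrArg Prod.fst heq
      have h2 := congrArg Prod.snd heq
      simp only [] at h1 h2
      exact Prod.ext (by omega) h2
  · -- Case 3: deep entries with np = p ≥ 1
    set p := v + 2 - k with hp
    have hp1 : 1 ≤ p := by omega
    set II : ℕ × ℕ → ℕ := fun c' =>
      (((Finset.range c'.1).filter (fun x => lamF B c'.1 - c'.2 ≤ ovF B k x)).max).getD 0
      with hII
    -- facts per LHS element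
    have elt_fact : ∀ c' ∈ B.cells.filter (fun c' => entF B k c'.1 c'.2 = v + 2 ∧
        (readBefore c' c ∨ c' = c)),
        npF B k c'.1 (lamF B c'.1 - c'.2) = p ∧ 1 ≤ lamF B c'.1 - c'.2 ∧
        lamF B c'.1 - c'.2 ≤ ovF B k c'.1 ∧
        (II c' < c'.1 ∧ lamF B c'.1 - c'.2 ≤ ovF B k (II c') ∧
          npF B k (II c') (lamF B c'.1 - c'.2) = p - 1) := by
      intro c' hc'
      obtain ⟨hrow, he, hmem⟩ := lhs_fact c' hc'
      have hcell : (c'.1, c'.2) ∈ B.cells := hmem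
      have hdeep : k ≤ depF B c'.1 c'.2 ∧ npF B k c'.1 (lamF B c'.1 - c'.2) = p := by
        rcases ent_spec B k hcell with ⟨h1, h2⟩ | ⟨h1, h2⟩
        · omega
        · exact ⟨h1, by omega⟩
      obtain ⟨_, _, hjr1, hjr2, _⟩ := deep_facts B hk hcell hdeep.1
      obtain ⟨z, hz1, hz2, hz3, hz4⟩ := np_pred B hp1 hdeep.2
      have hzII : II c' = z := by
        rw [hII]
        simp only []
        -- max of the filter set is z
        have hSne : ((Finset.range c'.1).filter
            (fun x => lamF B c'.1 - c'.2 ≤ ovF B k x)).Nonempty :=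
          ⟨z, Finset.mem_filter.mpr ⟨Finset.mem_range.mpr hz1, hz2⟩⟩
        obtain ⟨hmem2, hmax2⟩ := max_getD_spec _ hSne
        obtain ⟨ha, hb⟩ := Finset.mem_filter.mp hmem2
        have h1 := hz4 _ (Finset.mem_range.mp ha) hb
        have h2 := hmax2 z (Finset.mem_filter.mpr ⟨Finset.mem_range.mpr hz1, hz2⟩)
        omega
      rw [hzII]
      exact ⟨hdeep.2, hjr1, hjr2, hz1, hz2, hz3⟩
    apply Finset.card_le_card_of_injOn
      (fun c' => (II c', lamF B (II c') - (lamF B c'.1 - c'.2)))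
    · intro c' hc'
      obtain ⟨hnp, hjr1, hjr2, hz1, hz2, hz3⟩ := elt_fact c' hc'
      obtain ⟨hrow, he, hmem⟩ := lhs_fact c' hc'
      obtain ⟨hmm, hdd, hjr⟩ := deep_of_q B hk hjr1 hz2
      have hent2 : entF B k (II c') (lamF B (II c') - (lamF B c'.1 - c'.2)) = v + 1 := by
        rcases ent_spec B k hmm with ⟨h1, h2⟩ | ⟨h1, h2⟩
        · omega
        · rw [h2, hjr, hz3]
          omega
      refine Finset.mem_filter.mpr ⟨hmm, hent2, Or.inl (by dsimp only; omega)⟩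
    · intro c1 hc1 c2 hc2 heq
      obtain ⟨hnp1, hjra1, hjrb1, hza1, hzb1, hzc1⟩ := elt_fact c1 hc1
      obtain ⟨hnp2, hjra2, hjrb2, hza2, hzb2, hzc2⟩ := elt_fact c2 hc2
      obtain ⟨_, _, hm1⟩ := lhs_fact c1 hc1
      obtain ⟨_, _, hm2⟩ := lhs_fact c2 hc2
      have h1 := congrArg Prod.fst heq
      have h2 := congrArg Prod.snd heq
      simp only [] at h1 h2
      -- same z, same jr
      have hovlam : ovF B k (II c1) ≤ lamF B (II c1) := ov_le_lam B k (II c1)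
      rw [h1] at h2 hovlam hzb1 hzc1
      have hjreq : lamF B c1.1 - c1.2 = lamF B c2.1 - c2.2 := by omega
      -- rows equal
      have hroweq : c1.1 = c2.1 := by
        by_contra hcon
        rcases Nat.lt_or_ge c1.1 c2.1 with hlt | hge
        · have hx := np_row_lt B hlt hjrb1
          rw [hjreq] at hx hnp1
          omega
        · have hx := np_row_lt B (show c2.1 < c1.1 by omega) hjrb2
          rw [← hjreq] at hx hnp2
          omega
      -- columns equal
      have hlam1 : c1.2 < lamF B c1.1 := ((mem_cells_iff B).mp hm1).2
      have hlam2 : c2.2 < lamF B c2.1 := ((mem_cells_iff B).mp hm2).2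
      refine Prod.ext hroweq ?_
      rw [hroweq] at hjreq hlam1
      omega

end PartIIb

section PartIIc

open Finset

/-- Rank lemma: the elements of `S` whose rank (number of smaller elements of `S`) is
below `m` number exactly `min m S.card`. -/
lemma rank_filter_card (m : ℕ) (S : Finset ℕ) :
    (S.filter (fun i => (S.filter (fun x => x < i)).card < m)).card = min m S.card := by
  classical
  induction S using Finset.induction_on_max with
  | empty => simp
  | insert a s ha ih =>
    have hnotmem : a ∉ s := fun hcon => by have := ha a hcon; omega
    have hfa : (insert a s).filter (fun x => x < a) = s := by
      ext x
      simp only [Finset.mem_filter, Finset.mem_insert]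
      constructor
      · rintro ⟨h1 | h1, h2⟩
        · omega
        · exact h1
      · intro hx
        exact ⟨Or.inr hx, ha x hx⟩
    have hfi : ∀ i ∈ s, (insert a s).filter (fun x => x < i) = s.filter (fun x => x < i) := by
      intro i hi
      ext x
      simp only [Finset.mem_filter, Finset.mem_insert]
      have hia := ha i hi
      constructor
      · rintro ⟨h1 | h1, h2⟩
        · omega
        · exact ⟨h1, h2⟩
      · rintro ⟨h1, h2⟩
        exact ⟨Or.inr h1, h2⟩
    have hcongr : s.filter (fun i => ((insert a s).filter (fun x => x < i)).card < m) =
        s.filter (fun i => (s.filter (fun x => x < i)).card < m) := by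
      apply Finset.filter_congr
      intro i hi
      rw [hfi i hi]
    rw [Finset.filter_insert, hfa]
    by_cases hm : s.card < m
    · rw [if_pos hm, Finset.card_insert_of_notMem
        (fun hcon => hnotmem (Finset.mem_of_mem_filter a hcon)), hcongr, ih,
        Finset.card_insert_of_notMem hnotmem]
      omega
    · rw [if_neg hm, hcongr, ih, Finset.card_insert_of_notMem hnotmem]
      omega

/-- Layer-cake formula for the sum of the `m` largest entries of a weakly decreasing list. -/
lemma layer_sorted : ∀ (s : List ℕ), s.Pairwise (fun a b => b ≤ a) → ∀ (C m : ℕ),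
    (∀ x ∈ s, x ≤ C) →
    ∑ q ∈ Finset.Icc 1 C, min m (s.countP (fun x => decide (q ≤ x))) = (s.take m).sum := by
  intro s
  induction s with
  | nil =>
    intro _ C m _
    simp
  | cons a s ih =>
    intro hs C m hC
    obtain ⟨ha, hs'⟩ := List.pairwise_cons.mp hs
    rcases Nat.eq_zero_or_pos m with hm | hm
    · subst hm
      simp
    obtain ⟨m', rfl⟩ : ∃ m', m = m' + 1 := ⟨m - 1, by omega⟩
    have key : ∀ q ∈ Finset.Icc 1 C,
        min (m' + 1) ((a :: s).countP (fun x => decide (q ≤ x))) =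
        min m' (s.countP (fun x => decide (q ≤ x))) + (if q ≤ a then 1 else 0) := by
      intro q hq
      rw [List.countP_cons]
      by_cases hqa : q ≤ a
      · simp only [decide_eq_true_eq, if_pos hqa]
        omega
      · have hzero : s.countP (fun x => decide (q ≤ x)) = 0 := by
          rw [List.countP_eq_zero]
          intro x hx
          have := ha x hx
          simp only [decide_eq_true_eq]
          omega
        simp only [decide_eq_true_eq, if_neg hqa, hzero]
        omega
    rw [Finset.sum_congr rfl key, Finset.sum_add_distrib]
    have hsum2 : ∑ q ∈ Finset.Icc 1 C, (if q ≤ a then 1 else 0) = a := by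
      rw [← Finset.sum_filter]
      have : (Finset.Icc 1 C).filter (fun q => q ≤ a) = Finset.Icc 1 a := by
        ext q
        simp only [Finset.mem_filter, Finset.mem_Icc]
        have := hC a (by simp)
        omega
      rw [this]
      simp [Nat.card_Icc]
    rw [hsum2, ih hs' C m' (fun x hx => hC x (by simp [hx]))]
    rw [List.take_succ_cons, List.sum_cons]
    omega

lemma ov_eq_overlap (B : SkewShape) {k : ℕ} (hk : 1 ≤ k) (i0 : ℕ) :
    B.overlap k i0 = ovF B k (i0 + k - 1) := by
  classical
  unfold SkewShape.overlap
  have hset : (Finset.range B.numCols).filter (fun j => ∀ t, t < k → (i0 + t, j) ∈ B.cells) =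
      Finset.Ico (muF B i0) (lamF B (i0 + k - 1)) := by
    ext j
    simp only [Finset.mem_filter, Finset.mem_range, Finset.mem_Ico]
    constructor
    · rintro ⟨hj, hp⟩
      have h0 := (mem_cells_iff B).mp (by simpa using hp 0 (by omega))
      have h1 := (mem_cells_iff B).mp (hp (k-1) (by omega))
      have heq : i0 + (k - 1) = i0 + k - 1 := by omega
      rw [heq] at h1
      exact ⟨h0.1, h1.2⟩
    · rintro ⟨h1, h2⟩
      have hnc : lamF B (i0 + k - 1) ≤ lamF B 0 := lam_anti B (by omega)
      have hnc2 : lamF B 0 = B.numCols := rfl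
      refine ⟨by omega, fun t ht => ?_⟩
      rw [mem_cells_iff]
      have hmu : muF B (i0 + t) ≤ muF B i0 := mu_anti B (by omega)
      have hlam : lamF B (i0 + k - 1) ≤ lamF B (i0 + t) := lam_anti B (by omega)
      omega
  rw [hset, Nat.card_Ico]
  unfold ovF
  rw [if_neg (by omega)]
  have heq : i0 + k - 1 + 1 - k = i0 := by omega
  rw [heq]

lemma countP_range_eq (n : ℕ) (p : ℕ → Prop) [DecidablePred p] :
    ((Finset.range n).filter p).card = (List.range n).countP (fun x => decide (p x)) := by
  induction n with
  | zero => simp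
  | succ n ih =>
    rw [Finset.range_add_one, Finset.filter_insert, List.range_succ, List.countP_append]
    have hsingle : [n].countP (fun x => decide (p x)) = if p n then 1 else 0 := by
      by_cases hp : p n <;> simp [List.countP_cons, hp]
    by_cases hp : p n
    · rw [if_pos hp, Finset.card_insert_of_notMem (by simp), ih, hsingle, if_pos hp]
    · rw [if_neg hp, ih, hsingle, if_neg hp]
      omega

/-- The take-`m` sum of `rowsK` as a layer-cake count. -/
lemma rowsK_take_sum (B : SkewShape) {k : ℕ} (hk : 1 ≤ k) (m : ℕ) :
    ((B.rowsK k).take m).sum =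
      ∑ q ∈ Finset.Icc 1 B.numCols, min m
        (((Finset.range B.numRows).filter (fun i => q ≤ ovF B k i)).card) := by
  classical
  -- sortedness of rowsK
  have hsorted : (B.rowsK k).Pairwise (fun a b => b ≤ a) := by
    unfold SkewShape.rowsK sortDesc
    have := List.pairwise_mergeSort (le := fun a b : ℕ => decide (b ≤ a))
      (fun a b c h1 h2 => by
        simp only [decide_eq_true_eq] at *
        omega)
      (fun a b => by
        simp only [Bool.or_eq_true, decide_eq_true_eq]
        omega)
      (((List.range (B.numRows + 1 - k)).map (B.overlap k)).filter (fun x => decide (0 < x)))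
    exact this.imp (fun h => by simpa using h)
  have hperm : List.Perm (B.rowsK k)
      (((List.range (B.numRows + 1 - k)).map (B.overlap k)).filter (fun x => decide (0 < x))) :=
    List.mergeSort_perm _ _
  have hbound : ∀ x ∈ B.rowsK k, x ≤ B.numCols := by
    intro x hx
    have hx2 := hperm.mem_iff.mp hx
    have hx3 := List.mem_filter.mp hx2
    obtain ⟨i0, _, rfl⟩ := List.mem_map.mp hx3.1
    rw [ov_eq_overlap B hk i0]
    calc ovF B k (i0 + k - 1) ≤ lamF B (i0 + k - 1) := ov_le_lam B k _
      _ ≤ lamF B 0 := lam_anti B (by omega)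
      _ = B.numCols := rfl
  rw [← layer_sorted (B.rowsK k) hsorted B.numCols m hbound]
  apply Finset.sum_congr rfl
  intro q hq
  have hq1 : 1 ≤ q := (Finset.mem_Icc.mp hq).1
  congr 1
  -- countP of rowsK = finset count
  rw [hperm.countP_eq]
  rw [List.countP_filter]
  have hcount1 : ((List.range (B.numRows + 1 - k)).map (B.overlap k)).countP
      (fun a => decide (q ≤ a) && decide (0 < a)) =
      ((List.range (B.numRows + 1 - k)).map (B.overlap k)).countP (fun a => decide (q ≤ a)) := by
    apply List.countP_congr
    intro x _
    constructor
    · intro hx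
      simp only [Bool.and_eq_true, decide_eq_true_eq] at hx ⊢
      omega
    · intro hx
      simp only [Bool.and_eq_true, decide_eq_true_eq] at hx ⊢
      omega
  rw [hcount1, List.countP_map]
  have hcount2 : (List.range (B.numRows + 1 - k)).countP
      ((fun a => decide (q ≤ a)) ∘ B.overlap k) =
      ((Finset.range (B.numRows + 1 - k)).filter (fun i0 => q ≤ B.overlap k i0)).card := by
    rw [countP_range_eq]
    rfl
  rw [hcount2]
  -- bijection between window indices and bottom rows
  apply Finset.card_bij (fun i0 _ => i0 + k - 1)
  · intro i0 hi0
    obtain ⟨h1, h2⟩ := Finset.mem_filter.mp hi0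
    have h3 := Finset.mem_range.mp h1
    rw [ov_eq_overlap B hk i0] at h2
    exact Finset.mem_filter.mpr ⟨Finset.mem_range.mpr (by omega), h2⟩
  · intro i1 h1 i2 h2 heq
    have := Finset.mem_range.mp (Finset.mem_filter.mp h1).1
    have := Finset.mem_range.mp (Finset.mem_filter.mp h2).1
    omega
  · intro i hi
    obtain ⟨h1, h2⟩ := Finset.mem_filter.mp hi
    have h3 := Finset.mem_range.mp h1
    have hov : ¬ (i + 1 < k) := by
      by_contra hcon
      unfold ovF at h2
      rw [if_pos hcon] at h2
      omega
    refine ⟨i + 1 - k, Finset.mem_filter.mpr ⟨Finset.mem_range.mpr (by omega), ?_⟩, by omega⟩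
    rw [ov_eq_overlap B hk]
    have heq : i + 1 - k + k - 1 = i := by omega
    rw [heq]
    exact h2

end PartIIc

section PartIId

open Finset

/-- The band of entries `[k, k+m)` of the canonical filling is controlled by the
layer-cake count. -/
lemma TB_band_le (B : SkewShape) {k : ℕ} (hk : 1 ≤ k) (m : ℕ) :
    (B.cells.filter (fun c => k ≤ (TB B k hk).entry c.1 c.2 ∧
      (TB B k hk).entry c.1 c.2 < k + m)).card ≤
    ∑ q ∈ Finset.Icc 1 B.numCols, min m
      (((Finset.range B.numRows).filter (fun i => q ≤ ovF B k i)).card) := by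
  classical
  have hentry : (TB B k hk).entry = entF B k := rfl
  simp only [hentry]
  set UU := (Finset.Icc 1 B.numCols).biUnion (fun q =>
    (((Finset.range B.numRows).filter (fun i => q ≤ ovF B k i ∧ npF B k i q < m)).image
      (fun i => (i, q)))) with hUU
  have step1 : (B.cells.filter (fun c => k ≤ entF B k c.1 c.2 ∧
      entF B k c.1 c.2 < k + m)).card ≤ UU.card := by
    apply Finset.card_le_card_of_injOn (fun c => (c.1, lamF B c.1 - c.2))
    · intro c hc
      obtain ⟨hm, h1, h2⟩ := Finset.mem_filter.mp hc
      have hcell : (c.1, c.2) ∈ B.cells := hm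
      have hdeep : k ≤ depF B c.1 c.2 ∧ npF B k c.1 (lamF B c.1 - c.2) < m := by
        rcases ent_spec B k hcell with ⟨ha, hb⟩ | ⟨ha, hb⟩
        · omega
        · exact ⟨ha, by omega⟩
      obtain ⟨_, _, hjr1, hjr2, _⟩ := deep_facts B hk hcell hdeep.1
      have hlamC : lamF B c.1 ≤ B.numCols := lam_anti B (Nat.zero_le c.1)
      rw [hUU]
      rw [Finset.mem_coe, Finset.mem_biUnion]
      refine ⟨lamF B c.1 - c.2, Finset.mem_Icc.mpr ⟨hjr1, by omega⟩, ?_⟩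
      rw [Finset.mem_image]
      exact ⟨c.1, Finset.mem_filter.mpr ⟨Finset.mem_range.mpr (cell_row_lt hm),
        hjr2, hdeep.2⟩, rfl⟩
    · intro c1 hc1 c2 hc2 heq
      obtain ⟨hm1, _, _⟩ := Finset.mem_filter.mp hc1
      obtain ⟨hm2, _, _⟩ := Finset.mem_filter.mp hc2
      have h1 := congrArg Prod.fst heq
      have h2 := congrArg Prod.snd heq
      simp only [] at h1 h2
      have hl1 := ((mem_cells_iff B).mp hm1).2
      have hl2 := ((mem_cells_iff B).mp hm2).2
      refine Prod.ext h1 ?_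
      rw [h1] at h2 hl1
      omega
  have step2 : UU.card = ∑ q ∈ Finset.Icc 1 B.numCols,
      (((Finset.range B.numRows).filter (fun i => q ≤ ovF B k i ∧ npF B k i q < m))).card := by
    rw [hUU, Finset.card_biUnion]
    · apply Finset.sum_congr rfl
      intro q _
      apply Finset.card_image_of_injective
      intro a b hab
      exact (Prod.mk.injEq _ _ _ _).mp hab |>.1
    · intro q1 _ q2 _ hne
      rw [Function.onFun, Finset.disjoint_left]
      intro x hx1 hx2
      obtain ⟨_, _, hx1e⟩ := Finset.mem_image.mp hx1
      obtain ⟨_, _, hx2e⟩ := Finset.mem_image.mp hx2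
      apply hne
      have e1 := congrArg Prod.snd hx1e
      have e2 := congrArg Prod.snd hx2e
      simp only [] at e1 e2
      omega
  have step3 : ∀ q, 1 ≤ q →
      (((Finset.range B.numRows).filter (fun i => q ≤ ovF B k i ∧ npF B k i q < m))).card =
      min m (((Finset.range B.numRows).filter (fun i => q ≤ ovF B k i)).card) := by
    intro q hq
    have hnp_eq : ∀ i, i < B.numRows → npF B k i q =
        (((Finset.range B.numRows).filter (fun x => q ≤ ovF B k x)).filter
          (fun x => x < i)).card := by
      intro i hi
      unfold npF
      rw [Finset.filter_filter]
      congr 1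
      ext x
      simp only [Finset.mem_filter, Finset.mem_range]
      constructor
      · rintro ⟨h1, h2⟩
        exact ⟨by omega, h2, h1⟩
      · rintro ⟨h1, h2, h3⟩
        exact ⟨h3, h2⟩
    have hkey : (Finset.range B.numRows).filter (fun i => q ≤ ovF B k i ∧ npF B k i q < m) =
        ((Finset.range B.numRows).filter (fun x => q ≤ ovF B k x)).filter
          (fun i => ((((Finset.range B.numRows).filter (fun x => q ≤ ovF B k x)).filter
            (fun x => x < i)).card) < m) := by
      ext i
      simp only [Finset.mem_filter, Finset.mem_range]
      constructor
      · rintro ⟨h1, h2, h3⟩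
        exact ⟨⟨h1, h2⟩, by rw [← hnp_eq i h1]; exact h3⟩
      · rintro ⟨⟨h1, h2⟩, h3⟩
        exact ⟨h1, h2, by rw [hnp_eq i h1]; exact h3⟩
    rw [hkey, rank_filter_card]
  calc (B.cells.filter (fun c => k ≤ entF B k c.1 c.2 ∧ entF B k c.1 c.2 < k + m)).card
      ≤ UU.card := step1
    _ = _ := step2
    _ = _ := Finset.sum_congr rfl (fun q hq => step3 q (Finset.mem_Icc.mp hq).1)

lemma ent_lt_bound (B : SkewShape) {k : ℕ} (hk : 1 ≤ k) :
    ∀ c ∈ B.cells, entF B k c.1 c.2 < B.numRows + k := by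
  intro c hc
  have hcell : (c.1, c.2) ∈ B.cells := hc
  have hrow := cell_row_lt hc
  rcases ent_spec B k hcell with ⟨h1, h2⟩ | ⟨h1, h2⟩
  · have := dep_le B c.1 c.2
    omega
  · have hnp : npF B k c.1 (lamF B c.1 - c.2) ≤ c.1 := by
      unfold npF
      calc _ ≤ (Finset.range c.1).card := Finset.card_le_card (Finset.filter_subset _ _)
        _ = c.1 := Finset.card_range _
    omega

lemma cc_anti {A : SkewShape} (T : SkewSsyt A) (hLR : IsLR T) (v : ℕ) :
    contentCount T (v + 2) ≤ contentCount T (v + 1) := by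
  classical
  unfold contentCount
  rcases (A.cells.filter (fun c => T.entry c.1 c.2 = v + 2)).eq_empty_or_nonempty with he | hne
  · rw [he]; simp
  obtain ⟨cm, hcm, hmax⟩ := exists_read_max hne
  obtain ⟨h1, h2⟩ := Finset.mem_filter.mp hcm
  have hlr := hLR cm h1 v h2
  calc (A.cells.filter (fun c => T.entry c.1 c.2 = v + 2)).card
      ≤ (A.cells.filter (fun c' => T.entry c'.1 c'.2 = v + 2 ∧
          (readBefore c' cm ∨ c' = cm))).card := by
        apply Finset.card_le_card
        intro c hc
        obtain ⟨ha, hb⟩ := Finset.mem_filter.mp hc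
        exact Finset.mem_filter.mpr ⟨ha, hb, hmax c hc⟩
    _ ≤ (A.cells.filter (fun c' => T.entry c'.1 c'.2 = v + 1 ∧ readBefore c' cm)).card := hlr
    _ ≤ (A.cells.filter (fun c => T.entry c.1 c.2 = v + 1)).card := by
        apply Finset.card_le_card
        intro c hc
        obtain ⟨ha, hb, _⟩ := Finset.mem_filter.mp hc
        exact Finset.mem_filter.mpr ⟨ha, hb⟩

lemma cc_mono {A : SkewShape} (T : SkewSsyt A) (hLR : IsLR T) :
    ∀ a b : ℕ, a ≤ b → contentCount T (b + 1) ≤ contentCount T (a + 1) := by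
  intro a b
  induction b with
  | zero =>
    intro hab
    have ha : a = 0 := by omega
    rw [ha]
  | succ b ih =>
    intro hab
    rcases Nat.eq_or_lt_of_le hab with he | hlt
    · subst he; exact le_refl _
    · have h1 : contentCount T (b + 2) ≤ contentCount T (b + 1) := cc_anti T hLR b
      have h2 := ih (by omega)
      have h3 : contentCount T (b + 1 + 1) = contentCount T (b + 2) := rfl
      omega

lemma getD_map_range (f : ℕ → ℕ) (E v : ℕ) :
    (((List.range E).map f).getD v 0) = if v < E then f v else 0 := by
  by_cases h : v < E
  · rw [if_pos h, List.getD_eq_getElem _ _ (by simpa using h)]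
    simp
  · rw [if_neg h, List.getD_eq_default _ _ (by simpa using h)]

/-- The content of the canonical filling, as a list. -/
def nuB (B : SkewShape) (k : ℕ) (hk : 1 ≤ k) : List ℕ :=
  (List.range (B.numRows + k)).map (fun v => contentCount (TB B k hk) (v + 1))

lemma nuB_sorted (B : SkewShape) (k : ℕ) (hk : 1 ≤ k) :
    (nuB B k hk).Pairwise (· ≥ ·) := by
  unfold nuB
  rw [List.pairwise_map]
  apply List.pairwise_lt_range.imp
  intro a b hab
  exact cc_mono (TB B k hk) (TB_isLR B k hk) a b (le_of_lt hab)

lemma TB_hasContent (B : SkewShape) (k : ℕ) (hk : 1 ≤ k) :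
    HasContent (TB B k hk) (nuB B k hk) := by
  intro v
  unfold nuB
  rw [getD_map_range]
  by_cases h : v < B.numRows + k
  · rw [if_pos h]
  · rw [if_neg h]
    unfold contentCount
    rw [Finset.card_eq_zero]
    apply Finset.filter_false_of_mem
    intro c hc
    have := ent_lt_bound B hk c hc
    have hentry : (TB B k hk).entry = entF B k := rfl
    rw [hentry]
    omega

end PartIId


/-- Theorem `thm:main`.
Let `A` and `B` be skew shapes.  If `supp(A) ⊇ supp(B)`, i.e. every partition appearing
in the Schur expansion of `s_B` also appears in the Schur expansion of `s_A`, then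
`rows_k(A) ⊴ rows_k(B)` in the dominance order for all `k ≥ 1`. -/
theorem rowsK_dom_of_support_subset (A B : SkewShape) (h : B.support ⊆ A.support) :
    ∀ k, 1 ≤ k → Dom (A.rowsK k) (B.rowsK k) := by
  intro k hk m
  classical
  have hmem : nuB B k hk ∈ B.support :=
    ⟨nuB_sorted B k hk, TB B k hk, TB_isLR B k hk, TB_hasContent B k hk⟩
  obtain ⟨_, TA, hLRA, hcA⟩ := h hmem
  have h1 : ((A.rowsK k).take m).sum ≤ ∑ j ∈ Finset.range m, (nuB B k hk).getD (k - 1 + j) 0 :=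
    partI TA hLRA hcA hk
  have h2 : ∑ j ∈ Finset.range m, (nuB B k hk).getD (k - 1 + j) 0 =
      (B.cells.filter (fun c => k ≤ (TB B k hk).entry c.1 c.2 ∧
        (TB B k hk).entry c.1 c.2 < k + m)).card := by
    rw [band_card (TB B k hk)]
    apply Finset.sum_congr rfl
    intro j _
    rw [show k + j = (k - 1 + j) + 1 by omega, TB_hasContent B k hk (k - 1 + j)]
  have h3 := TB_band_le B hk m
  have h4 := rowsK_take_sum B hk m
  omega
end
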